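/- arXiv:2312.02072 — 9 statements merged into one kernel-verified Lean document; each statement's English description precedes it below -/
import Mathlib

section
/- For all β > 0, K'(+0) − K'(−0) = 1/(1+β²). Consequently (using also that K'(0) = (K'(+0)+K'(−0))/2 is negative), K'(−0) < K'(+0) < −K'(−0), and in particular K'(−0) < 0. -/
open Real

/-- The kernel `K` of the logarithmic-spiral vortex-sheet system. -/
noncomputable def Kker (β θ : ℝ) : ℝ :=
  (1/4) * (Complex.exp ((2*((β:ℂ) - Complex.I)/(1+(β:ℂ)^2)) * ((θ:ℂ) - (Real.pi:ℂ))) /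
    Complex.sin (2*(Real.pi:ℂ)*(1+Complex.I*(β:ℂ))/(1+(β:ℂ)^2))).re

/-- The derivative `K'` of the kernel on `(0, 2π)`, given by the explicit formula;
`Kd β 0` is `K'(+0)` and `Kd β (2π)` is `K'(−0)` (the formula is continuous). -/
noncomputable def Kd (β θ : ℝ) : ℝ :=
  (2*β/(1+β^2)) * Kker β θ +
  (1/(2*(1+β^2))) * (Complex.exp ((2*((β:ℂ) - Complex.I)/(1+(β:ℂ)^2)) * ((θ:ℂ) - (Real.pi:ℂ))) /
    Complex.sin (2*(Real.pi:ℂ)*(1+Complex.I*(β:ℂ))/(1+(β:ℂ)^2))).im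

/-- `K'(0) = (K'(+0) + K'(−0))/2`. -/
noncomputable def Kd0 (β : ℝ) : ℝ := (Kd β 0 + Kd β (2*Real.pi))/2

/-- The second derivative `K''` of the kernel on `(0, 2π)`. -/
noncomputable def Kdd (β θ : ℝ) : ℝ := deriv (Kd β) θ

/-- For all `β > 0`, `K'(+0) − K'(−0) = 1/(1+β²)`; consequently
`K'(−0) < K'(+0) < −K'(−0)`, and in particular `K'(−0) < 0`. -/
theorem kernel_deriv_jump (β : ℝ) (hβ : 0 < β) :
    Kd β 0 - Kd β (2*Real.pi) = 1/(1+β^2) ∧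
    Kd β (2*Real.pi) < Kd β 0 ∧
    Kd β 0 < -Kd β (2*Real.pi) ∧
    Kd β (2*Real.pi) < 0 := by
  have hc : (0:ℝ) < 1 + β^2 := by positivity
  have hden : (1:ℂ) + (β:ℂ)^2 ≠ 0 := by
    intro h
    have : ((1 + β^2 : ℝ) : ℂ) = 0 := by push_cast; exact h
    exact absurd (Complex.ofReal_eq_zero.1 this) (ne_of_gt hc)
  set x : ℝ := 2*Real.pi/(1+β^2) with hx
  have hxpos : 0 < x := by rw [hx]; positivity
  set y : ℝ := β * x with hy
  have hypos : 0 < y := by rw [hy]; positivity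
  set z : ℂ := 2*(Real.pi:ℂ)*(1+Complex.I*(β:ℂ))/(1+(β:ℂ)^2) with hzdef
  have hz : z = (x:ℂ) + (y : ℝ)*Complex.I := by
    rw [hzdef, hx, hy, hx]; push_cast; field_simp
  have hzre : z.re = x := by rw [hz]; simp
  have hzim : z.im = y := by rw [hz]; simp
  have hsin : Complex.sin z ≠ 0 := by
    intro h
    obtain ⟨k, hk⟩ := Complex.sin_eq_zero_iff.1 h
    have : z.im = 0 := by rw [hk]; simp
    rw [hzim] at this
    nlinarith
  have arg0 : (2*((β:ℂ) - Complex.I)/(1+(β:ℂ)^2)) * (((0:ℝ):ℂ) - (Real.pi:ℂ)) = z * Complex.I := by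
    rw [hzdef]; push_cast; field_simp
    linear_combination (-((Real.pi:ℂ)*(β:ℂ))) * Complex.I_sq
  have arg2 : (2*((β:ℂ) - Complex.I)/(1+(β:ℂ)^2)) * (((2*Real.pi:ℝ):ℂ) - (Real.pi:ℂ)) = (-z) * Complex.I := by
    rw [hzdef]; push_cast; field_simp
    linear_combination (β:ℂ) * Complex.I_sq
  have hE0 : Complex.exp (z * Complex.I) = Complex.cos z + Complex.sin z * Complex.I :=
    Complex.exp_mul_I z
  have hE2 : Complex.exp ((-z) * Complex.I) = Complex.cos z - Complex.sin z * Complex.I := by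
    rw [Complex.exp_mul_I, Complex.cos_neg, Complex.sin_neg]; ring
  set q0 : ℂ := Complex.exp (z * Complex.I) / Complex.sin z with hq0
  set q2 : ℂ := Complex.exp ((-z) * Complex.I) / Complex.sin z with hq2
  have hK0 : Kd β 0 = (2*β/(1+β^2)) * ((1/4) * q0.re) + (1/(2*(1+β^2))) * q0.im := by
    rw [Kd, Kker, arg0]
  have hK2 : Kd β (2*Real.pi) = (2*β/(1+β^2)) * ((1/4) * q2.re) + (1/(2*(1+β^2))) * q2.im := by
    rw [Kd, Kker, arg2]
  -- difference
  have hqd : q0 - q2 = 2*Complex.I := by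
    rw [hq0, hq2, hE0, hE2]
    field_simp
    ring
  have hdre : q0.re - q2.re = 0 := by
    have := congrArg Complex.re hqd; simpa using this
  have hdim : q0.im - q2.im = 2 := by
    have := congrArg Complex.im hqd; simpa using this
  have h1 : Kd β 0 - Kd β (2*Real.pi) = 1/(1+β^2) := by
    rw [hK0, hK2]
    have e1 : q0.re = q2.re := by linarith
    have e2 : q0.im = q2.im + 2 := by linarith
    rw [e1, e2]
    field_simp
    ring
  -- sum
  have hqs : q0 + q2 = 2 * (Complex.cos z / Complex.sin z) := by
    rw [hq0, hq2, hE0, hE2]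
    field_simp
    ring
  set R : ℂ := Complex.cos z / Complex.sin z with hR
  have hsre : q0.re + q2.re = 2 * R.re := by
    have := congrArg Complex.re hqs; simpa using this
  have hsim : q0.im + q2.im = 2 * R.im := by
    have := congrArg Complex.im hqs; simpa using this
  have hsum : Kd β 0 + Kd β (2*Real.pi) = (β/(1+β^2)) * R.re + (1/(1+β^2)) * R.im := by
    rw [hK0, hK2]
    have e3 : q2.re = 2*R.re - q0.re := by linarith
    have e4 : q2.im = 2*R.im - q0.im := by linarith
    rw [e3, e4]
    field_simp
    ring
  -- components of sin z, cos z
  have hszre : (Complex.sin z).re = Real.sin x * Real.cosh y := by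
    rw [Complex.sin_eq, hzre, hzim]
    simp [Complex.add_re, Complex.mul_re, Complex.mul_im, Complex.I_re, Complex.I_im,
      Complex.sin_ofReal_re, Complex.sin_ofReal_im, Complex.cos_ofReal_re, Complex.cos_ofReal_im,
      Complex.sinh_ofReal_re, Complex.sinh_ofReal_im, Complex.cosh_ofReal_re, Complex.cosh_ofReal_im]
  have hszim : (Complex.sin z).im = Real.cos x * Real.sinh y := by
    rw [Complex.sin_eq, hzre, hzim]
    simp [Complex.add_im, Complex.mul_re, Complex.mul_im, Complex.I_re, Complex.I_im,
      Complex.sin_ofReal_re, Complex.sin_ofReal_im, Complex.cos_ofReal_re, Complex.cos_ofReal_im,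
      Complex.sinh_ofReal_re, Complex.sinh_ofReal_im, Complex.cosh_ofReal_re, Complex.cosh_ofReal_im]
  have hcre : (Complex.cos z).re = Real.cos x * Real.cosh y := by
    rw [Complex.cos_eq, hzre, hzim]
    simp [Complex.sub_re, Complex.mul_re, Complex.mul_im, Complex.I_re, Complex.I_im,
      Complex.sin_ofReal_re, Complex.sin_ofReal_im, Complex.cos_ofReal_re, Complex.cos_ofReal_im,
      Complex.sinh_ofReal_re, Complex.sinh_ofReal_im, Complex.cosh_ofReal_re, Complex.cosh_ofReal_im]
  have hcim : (Complex.cos z).im = -(Real.sin x * Real.sinh y) := by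
    rw [Complex.cos_eq, hzre, hzim]
    simp [Complex.sub_im, Complex.mul_re, Complex.mul_im, Complex.I_re, Complex.I_im,
      Complex.sin_ofReal_re, Complex.sin_ofReal_im, Complex.cos_ofReal_re, Complex.cos_ofReal_im,
      Complex.sinh_ofReal_re, Complex.sinh_ofReal_im, Complex.cosh_ofReal_re, Complex.cosh_ofReal_im]
  set N : ℝ := Complex.normSq (Complex.sin z) with hN
  have hNpos : 0 < N := by rw [hN]; exact Complex.normSq_pos.2 hsin
  have hcs : Real.cosh y^2 - Real.sinh y^2 = 1 := Real.cosh_sq_sub_sinh_sq y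
  have hsc : Real.sin x^2 + Real.cos x^2 = 1 := Real.sin_sq_add_cos_sq x
  have hRre : R.re = (Real.sin x * Real.cos x)/N := by
    rw [hR, Complex.div_re, hszre, hszim, hcre, hcim, ← hN]
    rw [← add_div]
    congr 1
    linear_combination (Real.sin x * Real.cos x) * hcs
  have hRim : R.im = (-(Real.sinh y * Real.cosh y))/N := by
    rw [hR, Complex.div_im, hszre, hszim, hcre, hcim, ← hN]
    rw [div_sub_div_same]
    congr 1
    linear_combination (-(Real.sinh y * Real.cosh y)) * hsc
  -- key inequality: β sin x cos x < sinh y cosh y  (with y = βx)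
  have key : β * (Real.sin x * Real.cos x) - Real.sinh y * Real.cosh y < 0 := by
    have h2 : Real.sin (2*x) < 2*x := Real.sin_lt (by positivity)
    have hsin2 : Real.sin (2*x) = 2*Real.sin x*Real.cos x := Real.sin_two_mul x
    have h3 : y < Real.sinh y := Real.self_lt_sinh_iff.2 hypos
    have h4 : (1:ℝ) ≤ Real.cosh y := Real.one_le_cosh y
    have h5 : 0 < Real.sinh y := Real.sinh_pos_iff.2 hypos
    have h6 : β * Real.sin (2*x) < β * (2*x) := by
      exact mul_lt_mul_of_pos_left h2 hβ
    have h7 : Real.sinh y ≤ Real.sinh y * Real.cosh y := le_mul_of_one_le_right h5.le h4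
    rw [hsin2] at h6
    rw [hy] at h3 ⊢
    linarith
  have hsumlt : Kd β 0 + Kd β (2*Real.pi) < 0 := by
    rw [hsum, hRre, hRim]
    have heq : (β/(1+β^2)) * ((Real.sin x * Real.cos x)/N) + (1/(1+β^2)) * ((-(Real.sinh y * Real.cosh y))/N)
        = (β * (Real.sin x * Real.cos x) - Real.sinh y * Real.cosh y) / ((1+β^2)*N) := by
      field_simp
      ring
    rw [heq]
    exact div_neg_of_neg_of_pos key (by positivity)
  refine ⟨h1, ?_, ?_, ?_⟩
  · have := h1
    have h1c : 0 < 1/(1+β^2) := by positivity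
    linarith
  · linarith
  · have h1c : 0 < 1/(1+β^2) := by positivity
    linarith
end

section
/- For every β > 0 and every x > 0, β·sin x + cos x < e^{βx}. -/
open Real

/-- For every `β > 0` and every `x > 0`, `β·sin x + cos x < e^{βx}`. -/
theorem beta_sin_add_cos_lt_exp (β x : ℝ) (hβ : 0 < β) (hx : 0 < x) :
    β * Real.sin x + Real.cos x < Real.exp (β * x) := by
  have h1 : β * Real.sin x < β * x := by
    exact mul_lt_mul_of_pos_left (Real.sin_lt hx) hβ
  have h2 : Real.cos x ≤ 1 := Real.cos_le_one x
  have h3 : β * x + 1 < Real.exp (β * x) := by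
    have := Real.add_one_lt_exp (x := β * x) (by positivity)
    linarith
  linarith
end

section
/- Fix β > 0 and set γ = 4π/(1+β²). Define f(k) = cot(kγ) − e^{−kγβ}·csc(kγ) for those k ∈ (0,1] with sin(kγ) ≠ 0. Then at every such k, f is differentiable with f'(k) = γ·csc²(kγ)·e^{−kγβ}·( −e^{kγβ} + β·sin(kγ) + cos(kγ) ), and f'(k) < 0. -/
open Real

/-- Fix `β > 0` and `γ = 4π/(1+β²)`. At every `k ∈ (0,1]` with `sin(kγ) ≠ 0`, the function
`f(k) = cot(kγ) − e^{−kγβ}·csc(kγ)` is differentiable with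
`f'(k) = γ·csc²(kγ)·e^{−kγβ}·(−e^{kγβ} + β·sin(kγ) + cos(kγ))`, and `f'(k) < 0`. -/
theorem f_strict_decreasing (β : ℝ) (hβ : 0 < β) (γ : ℝ) (hγ : γ = 4*Real.pi/(1+β^2)) :
    ∀ k ∈ Set.Ioc (0:ℝ) 1, Real.sin (k*γ) ≠ 0 →
      HasDerivAt (fun k : ℝ =>
          Real.cos (k*γ) / Real.sin (k*γ) - Real.exp (-(k*γ*β)) / Real.sin (k*γ))
        (γ * (1/Real.sin (k*γ))^2 * Real.exp (-(k*γ*β)) *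
          (-Real.exp (k*γ*β) + β*Real.sin (k*γ) + Real.cos (k*γ))) k ∧
      γ * (1/Real.sin (k*γ))^2 * Real.exp (-(k*γ*β)) *
        (-Real.exp (k*γ*β) + β*Real.sin (k*γ) + Real.cos (k*γ)) < 0 := by
  intro k hk hs
  have hγpos : 0 < γ := by
    rw [hγ]; positivity
  have hkγ : 0 < k * γ := mul_pos hk.1 hγpos
  constructor
  · have hlin : HasDerivAt (fun k : ℝ => k * γ) γ k := by
      simpa using (hasDerivAt_id k).mul_const γ
    have h1 : HasDerivAt (fun k : ℝ => Real.cos (k*γ)) (-Real.sin (k*γ) * γ) k :=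
      hlin.cos
    have h2 : HasDerivAt (fun k : ℝ => Real.sin (k*γ)) (Real.cos (k*γ) * γ) k :=
      hlin.sin
    have hlin2 : HasDerivAt (fun k : ℝ => -(k*γ*β)) (-(γ*β)) k := by
      convert (hlin.mul_const β).neg using 1 <;> first | rfl | ring_nf | (funext x; simp)
    have h3 : HasDerivAt (fun k : ℝ => Real.exp (-(k*γ*β)))
        (Real.exp (-(k*γ*β)) * (-(γ*β))) k :=
      hlin2.exp
    have hd : HasDerivAt (fun k : ℝ =>
          Real.cos (k*γ) / Real.sin (k*γ) - Real.exp (-(k*γ*β)) / Real.sin (k*γ)) _ k :=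
        ((h1.div h2 hs).sub (h3.div h2 hs))
    convert hd using 1
    have hcs := Real.sin_sq_add_cos_sq (k*γ)
    have hE : Real.exp (-(k*γ*β)) * Real.exp (k*γ*β) = 1 := by
      rw [← Real.exp_add]; simp
    field_simp
    congr 1
    rw [mul_comm γ k]
    linear_combination hcs - hE
  · have hneg : -Real.exp (k*γ*β) + β*Real.sin (k*γ) + Real.cos (k*γ) < 0 := by
      have h1 : k*γ*β + 1 < Real.exp (k*γ*β) :=
        Real.add_one_lt_exp (by positivity)
      have h2 : Real.sin (k*γ) < k*γ := Real.sin_lt hkγ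
      have h3 : Real.cos (k*γ) ≤ 1 := Real.cos_le_one _
      nlinarith
    have hpos : 0 < γ * (1/Real.sin (k*γ))^2 * Real.exp (-(k*γ*β)) := by
      have := pow_two_pos_of_ne_zero (one_div_ne_zero hs)
      have := Real.exp_pos (-(k*γ*β))
      positivity
    exact mul_neg_of_pos_of_neg hpos hneg
end

section
/- Define g(β) = cot(γ(β)) − e^{−γ(β)·β}·csc(γ(β)) − β, where γ(β) = 4π/(1+β²). Then g is differentiable and g'(β) > 0 for every β ∈ (0, 1/√3) ∪ (1/√3, 1) ∪ (1, √3). -/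
open Real

set_option maxHeartbeats 1000000

private theorem arithC (p β E c s : ℝ) (hp : 3.141592 < p) (hβ1 : 1 < β) (hβ3 : β^2 < 3)
    (hE0 : 0 < E) (hE6 : E < 1/6) (hc : c ≤ 1) (hs : s < 0) (hs1 : s^2 ≤ 1) :
    0 < 8*p*β*(1-E*c) + 4*p*E*(1-β^2)*s - (1+β^2)^2*s^2 := by
  have hmid : 0 ≤ 4*p*E*(1-β^2)*s := by
    nlinarith [mul_nonneg (mul_nonneg (by positivity : (0:ℝ) ≤ 4*p*E)
      (by nlinarith : (0:ℝ) ≤ β^2-1)) (by linarith : (0:ℝ) ≤ -s)]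
  have t1 : 1 - E*c ≥ 1 - E := by nlinarith
  have t3 : 8*p*(5/6) < 8*p*β*(1-E*c) := by
    have h1 : (5:ℝ)/6 < 1 - E*c := by linarith
    have step2 : 8*p*(1-E*c) ≤ 8*p*β*(1-E*c) := by
      nlinarith [mul_nonneg (by nlinarith : (0:ℝ) ≤ 8*p*(β-1)) (by linarith : (0:ℝ) ≤ 1 - E*c)]
    nlinarith
  have t4 : (1+β^2)^2*s^2 ≤ 16 := by nlinarith [sq_nonneg s, sq_nonneg (1+β^2)]
  linarith

private theorem arithB (p β E c s : ℝ) (hp : 3.141592 < p) (hβ1 : 1 < 3*β^2) (hβ2 : β < 1)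
    (hβ0 : 0 < β) (hE0 : 0 < E) (hE6 : E < 1/6) (hc : c ≤ 1) (hs : 0 < s) (hs1 : s^2 ≤ 1) :
    0 < 8*p*β*(1-E*c) + 4*p*E*(1-β^2)*s - (1+β^2)^2*s^2 := by
  have hβl : (0.577:ℝ) < β := by nlinarith
  have hmid : 0 ≤ 4*p*E*(1-β^2)*s := by
    nlinarith [mul_nonneg (mul_nonneg (by positivity : (0:ℝ) ≤ 4*p*E)
      (by nlinarith : (0:ℝ) ≤ 1-β^2)) (le_of_lt hs)]
  have t1 : 1 - E*c ≥ 1 - E := by nlinarith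
  have t3 : 8*p*0.577*(5/6) < 8*p*β*(1-E*c) := by
    have h1 : (5:ℝ)/6 < 1 - E*c := by linarith
    nlinarith [mul_nonneg (by nlinarith : (0:ℝ) ≤ 8*p*(β-0.577))
      (by linarith : (0:ℝ) ≤ 1 - E*c),
      mul_lt_mul_of_pos_left h1 (by positivity : (0:ℝ) < 8*p*0.577)]
  have t4 : (1+β^2)^2*s^2 ≤ 4 := by
    have hb2 : β^2 < 1 := by nlinarith
    have h4 : (1+β^2)^2 ≤ 4 := by nlinarith [mul_le_mul_of_nonneg_left hb2.le (sq_nonneg β)]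
    nlinarith [mul_le_mul h4 hs1 (sq_nonneg s) (by norm_num : (0:ℝ) ≤ 4)]
  linarith

private theorem arithA1 (p β E t s c : ℝ) (hp : 3.141592 < p) (hp' : p < 3.141593)
    (hβ0 : 0 < β) (hβu : β ≤ 0.26) (hβ2 : 3*β^2 < 1)
    (hE0 : 0 < E) (hEu : E*(1+3*p*β) ≤ 1)
    (ht0 : 0 < t) (ht4 : t ≤ 4*p*β^2) (hs0 : 0 < s) (hst : s < t) (hc : c ≤ 1) :
    0 < 8*p*β*(1-E*c) - 4*p*E*(1-β^2)*s - (1+β^2)^2*s^2 := by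
  have hp0 : (0:ℝ) < p := by linarith
  have term1 : 8*p*β*(1-E*c) ≥ 8*p*β*(1-E) := by
    nlinarith [mul_nonneg (mul_nonneg (by positivity : (0:ℝ) ≤ 8*p*β) hE0.le)
      (by linarith : (0:ℝ) ≤ 1 - c)]
  have term2 : 4*p*E*(1-β^2)*s ≤ 16*p^2*β^2*E := by
    have s1 : 4*p*E*(1-β^2)*s ≤ 4*p*E*s := by
      nlinarith [mul_nonneg (mul_nonneg (by positivity : (0:ℝ) ≤ 4*p*E) (sq_nonneg β)) hs0.le]
    have s2 : 4*p*E*s ≤ 4*p*E*t := by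
      nlinarith [mul_le_mul_of_nonneg_left hst.le (by positivity : (0:ℝ) ≤ 4*p*E)]
    have s3 : 4*p*E*t ≤ 4*p*E*(4*p*β^2) := by
      nlinarith [mul_le_mul_of_nonneg_left ht4 (by positivity : (0:ℝ) ≤ 4*p*E)]
    nlinarith
  have term3 : (1+β^2)^2*s^2 ≤ (256/9)*p^2*β^4 := by
    have s1 : (1+β^2)^2 ≤ 16/9 := by nlinarith [sq_nonneg β]
    have s2 : s^2 ≤ t^2 := by nlinarith
    have s3 : t^2 ≤ 16*p^2*β^4 := by
      nlinarith [mul_le_mul ht4 ht4 ht0.le (by positivity : (0:ℝ) ≤ 4*p*β^2)]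
    nlinarith [mul_le_mul s1 (s2.trans s3) (sq_nonneg s) (by norm_num : (0:ℝ) ≤ 16/9)]
  have hu1 : (1:ℝ) < 1+3*p*β := by nlinarith
  have key : 0 < (8*p*β*(1-E) - 16*p^2*β^2*E - (256/9)*p^2*β^4) * (1+3*p*β) := by
    have e1 : 8*p*β*(1-E)*(1+3*p*β) ≥ 24*p^2*β^2 := by
      have h1 : (1+3*p*β) - E*(1+3*p*β) ≥ 3*p*β := by nlinarith
      nlinarith [mul_le_mul_of_nonneg_left h1 (by positivity : (0:ℝ) ≤ 8*p*β)]
    have e2 : 16*p^2*β^2*E*(1+3*p*β) ≤ 16*p^2*β^2 := by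
      nlinarith [mul_le_mul_of_nonneg_left hEu (by positivity : (0:ℝ) ≤ 16*p^2*β^2)]
    have e3 : (256/9)*p^2*β^4*(1+3*p*β) ≤ (256/9)*0.0676*3.4505*p^2*β^2 := by
      have hu2 : 1+3*p*β ≤ 3.4505 := by nlinarith
      have hb2 : β^2 ≤ 0.0676 := by nlinarith
      have hb4 : β^4 ≤ 0.0676*β^2 := by nlinarith [mul_le_mul_of_nonneg_left hb2 (sq_nonneg β)]
      nlinarith [mul_le_mul hb4 hu2 (by linarith) (by positivity : (0:ℝ) ≤ 0.0676*β^2),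
        sq_nonneg (p*β)]
    nlinarith [sq_nonneg (p*β), mul_pos hp0 hβ0]
  have hL : 0 < 8*p*β*(1-E) - 16*p^2*β^2*E - (256/9)*p^2*β^4 := by
    by_contra h
    push_neg at h
    nlinarith
  linarith

private theorem arithA2 (p β E s c : ℝ) (hp : 3.141592 < p) (hp' : p < 3.141593)
    (hβl : 0.26 ≤ β) (hβ2 : 3*β^2 < 1)
    (hE0 : 0 < E) (hE : E ≤ 1/5.99)
    (hs0 : 0 < s) (hs1 : s ≤ 1) (hc : c ≤ 1) :
    0 < 8*p*β*(1-E*c) - 4*p*E*(1-β^2)*s - (1+β^2)^2*s^2 := by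
  have hp0 : (0:ℝ) < p := by linarith
  have hβ0 : (0:ℝ) < β := by linarith
  have term1 : 8*p*β*(1-E*c) ≥ 8*p*0.26*(1-1/5.99) := by
    have h1 : 1 - E*c ≥ 1 - 1/5.99 := by nlinarith
    nlinarith [mul_le_mul (by nlinarith : 8*p*0.26 ≤ 8*p*β) h1 (by norm_num)
      (by positivity : (0:ℝ) ≤ 8*p*β)]
  have term2 : 4*p*E*(1-β^2)*s ≤ 4*p*(1/5.99) := by
    have h1 : (1-β^2)*s ≤ 1 := by nlinarith
    nlinarith [mul_le_mul hE h1 (by nlinarith : (0:ℝ) ≤ (1-β^2)*s)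
      (by norm_num : (0:ℝ) ≤ 1/5.99), hp0]
  have term3 : (1+β^2)^2*s^2 ≤ 16/9 := by
    have s1 : (1+β^2)^2 ≤ 16/9 := by nlinarith [sq_nonneg β]
    nlinarith [mul_le_mul s1 (by nlinarith : s^2 ≤ 1) (sq_nonneg s) (by norm_num : (0:ℝ) ≤ 16/9)]
  nlinarith

private theorem g_hasDerivAt (β : ℝ) (hD : (0:ℝ) < 1+β^2)
    (hs : Real.sin (4*π/(1+β^2)) ≠ 0) :
    HasDerivAt (fun β : ℝ =>
          Real.cos (4*Real.pi/(1+β^2)) / Real.sin (4*Real.pi/(1+β^2)) -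
            Real.exp (-(4*Real.pi/(1+β^2))*β) / Real.sin (4*Real.pi/(1+β^2)) - β)
      ((8*π*β*(1 - Real.exp (-(4*π/(1+β^2))*β) * Real.cos (4*π/(1+β^2)))
        + 4*π*Real.exp (-(4*π/(1+β^2))*β)*(1-β^2)*Real.sin (4*π/(1+β^2))
        - (1+β^2)^2 * Real.sin (4*π/(1+β^2))^2) / ((1+β^2)^2 * Real.sin (4*π/(1+β^2))^2)) β := by
  have hD' : (1:ℝ)+β^2 ≠ 0 := ne_of_gt hD
  have hden : HasDerivAt (fun b : ℝ => 1 + b^2) (2*β) β := by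
    simpa using (hasDerivAt_pow 2 β).const_add 1
  have hu : HasDerivAt (fun b : ℝ => 4*π/(1+b^2)) (-(8*π*β)/(1+β^2)^2) β := by
    have h := (hasDerivAt_const β (4*π)).div hden hD'
    refine h.congr_deriv ?_
    field_simp
    ring
  have hcos := (Real.hasDerivAt_cos (4*π/(1+β^2))).comp β hu
  have hsin := (Real.hasDerivAt_sin (4*π/(1+β^2))).comp β hu
  have hw : HasDerivAt (fun b : ℝ => -(4*π/(1+b^2))*b)
      (-(-(8*π*β)/(1+β^2)^2)*β + -(4*π/(1+β^2))*1) β :=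
    (hu.neg).mul (hasDerivAt_id β)
  have hexp := hw.exp
  have h1 := hcos.div hsin hs
  have h1' : HasDerivAt (fun y : ℝ => Real.cos (4*π/(1+y^2)) / Real.sin (4*π/(1+y^2)))
      ((8*π*β)/((1+β^2)^2 * Real.sin (4*π/(1+β^2))^2)) β := by
    refine h1.congr_deriv ?_
    have hpy := Real.sin_sq_add_cos_sq (4*π/(1+β^2))
    simp only [Function.comp_apply]
    field_simp
    linear_combination β * hpy
  have h2 := hexp.div hsin hs
  have H := (h1'.sub h2).sub (hasDerivAt_id β)
  refine H.congr_deriv ?_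
  simp only [Function.comp_apply]
  generalize Real.sin (4*π/(1+β^2)) = S at hs ⊢
  field_simp
  ring

/-- `g(β) = cot(γ(β)) − e^{−γ(β)β}·csc(γ(β)) − β` with `γ(β) = 4π/(1+β²)` is differentiable
with `g'(β) > 0` for every `β ∈ (0,1/√3) ∪ (1/√3,1) ∪ (1,√3)`. -/
theorem g_strict_increasing :
    ∀ β ∈ Set.Ioo (0:ℝ) (1/Real.sqrt 3) ∪ Set.Ioo (1/Real.sqrt 3) 1 ∪
        Set.Ioo (1:ℝ) (Real.sqrt 3),
      DifferentiableAt ℝ (fun β : ℝ =>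
          Real.cos (4*Real.pi/(1+β^2)) / Real.sin (4*Real.pi/(1+β^2)) -
            Real.exp (-(4*Real.pi/(1+β^2))*β) / Real.sin (4*Real.pi/(1+β^2)) - β) β ∧
      0 < deriv (fun β : ℝ =>
          Real.cos (4*Real.pi/(1+β^2)) / Real.sin (4*Real.pi/(1+β^2)) -
            Real.exp (-(4*Real.pi/(1+β^2))*β) / Real.sin (4*Real.pi/(1+β^2)) - β) β := by
  intro β hβ
  have hπ := Real.pi_gt_d6
  have hπ' := Real.pi_lt_d6
  have hπ0 : (0:ℝ) < π := by linarith
  have hsq3 : Real.sqrt 3 ^ 2 = 3 := Real.sq_sqrt (by norm_num)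
  have hsq3pos : (0:ℝ) < Real.sqrt 3 := Real.sqrt_pos.mpr (by norm_num)
  have hDpos : (0:ℝ) < 1+β^2 := by positivity
  have hD' : (1:ℝ)+β^2 ≠ 0 := ne_of_gt hDpos
  -- main goal reduction
  suffices h : Real.sin (4*π/(1+β^2)) ≠ 0 ∧
      0 < 8*π*β*(1 - Real.exp (-(4*π/(1+β^2))*β) * Real.cos (4*π/(1+β^2)))
        + 4*π*Real.exp (-(4*π/(1+β^2))*β)*(1-β^2)*Real.sin (4*π/(1+β^2))
        - (1+β^2)^2 * Real.sin (4*π/(1+β^2))^2 by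
    obtain ⟨hs, hΦ⟩ := h
    have H := g_hasDerivAt β hDpos hs
    refine ⟨H.differentiableAt, ?_⟩
    rw [H.deriv]
    apply div_pos hΦ
    apply mul_pos (by positivity)
    exact lt_of_le_of_ne (sq_nonneg _) (Ne.symm (pow_ne_zero 2 hs))
  simp only [Set.mem_union, Set.mem_Ioo] at hβ
  set E := Real.exp (-(4*π/(1+β^2))*β) with hEdef
  have hE0 : 0 < E := Real.exp_pos _
  have hEX : E * Real.exp ((4*π/(1+β^2))*β) = 1 := by
    rw [hEdef, ← Real.exp_add]
    norm_num
  have hc1 : Real.cos (4*π/(1+β^2)) ≤ 1 := Real.cos_le_one _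
  have hs1 : Real.sin (4*π/(1+β^2)) ^ 2 ≤ 1 := Real.sin_sq_le_one _
  rcases hβ with (⟨hb1, hb2⟩ | ⟨hb1, hb2⟩) | ⟨hb1, hb2⟩
  · -- Regime A : 0 < β < 1/√3
    have hβ0 : 0 < β := hb1
    have h3b : β * Real.sqrt 3 < 1 := by
      rw [show (1:ℝ)/Real.sqrt 3 = (Real.sqrt 3)⁻¹ by ring] at hb2
      calc β * Real.sqrt 3 < (Real.sqrt 3)⁻¹ * Real.sqrt 3 := by
            exact mul_lt_mul_of_pos_right hb2 hsq3pos
        _ = 1 := inv_mul_cancel₀ (ne_of_gt hsq3pos)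
    have hβ2 : 3*β^2 < 1 := by
      nlinarith [mul_nonneg hβ0.le hsq3pos.le]
    set θ := 4*π*β^2/(1+β^2) with hθdef
    have hθeq : 4*π/(1+β^2) = 4*π - θ := by
      rw [hθdef]; field_simp; ring
    have hsin4 : Real.sin (4*π) = 0 := by
      rw [show (4:ℝ)*π = ((4:ℤ):ℝ)*π by push_cast; ring]
      exact Real.sin_int_mul_pi 4
    have hcos4 : Real.cos (4*π) = 1 := by
      rw [show (4:ℝ)*π = ((2:ℤ):ℝ)*(2*π) by push_cast; ring]
      exact Real.cos_int_mul_two_pi 2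
    have hsinγ : Real.sin (4*π/(1+β^2)) = -Real.sin θ := by
      rw [hθeq, Real.sin_sub, hsin4, hcos4]; ring
    have hcosγ : Real.cos (4*π/(1+β^2)) = Real.cos θ := by
      rw [hθeq, Real.cos_sub, hsin4, hcos4]; ring
    have hθ0 : 0 < θ := by positivity
    have hθπ : θ < π := by
      rw [hθdef, div_lt_iff₀ hDpos]
      nlinarith [mul_pos hπ0 (show (0:ℝ) < 1-3*β^2 by linarith)]
    have hsθ : 0 < Real.sin θ := Real.sin_pos_of_pos_of_lt_pi hθ0 hθπ
    have hstθ : Real.sin θ < θ := Real.sin_lt hθ0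
    have ht4 : θ ≤ 4*π*β^2 := by
      rw [hθdef, div_le_iff₀ hDpos]
      nlinarith [mul_nonneg (by positivity : (0:ℝ) ≤ 4*π*β^2) (sq_nonneg β)]
    have hγ3π : 3*π ≤ 4*π/(1+β^2) := by
      rw [le_div_iff₀ hDpos]; nlinarith
    refine ⟨by rw [hsinγ]; exact neg_ne_zero.mpr (ne_of_gt hsθ), ?_⟩
    rw [hsinγ, hcosγ]
    have hcθ : Real.cos θ ≤ 1 := Real.cos_le_one _
    rcases le_or_gt β 0.26 with hle | hgt
    · -- A1
      have h1 : 1+3*π*β ≤ Real.exp ((4*π/(1+β^2))*β) := by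
        have h2 : 1 + 3*π*β ≤ 1 + (4*π/(1+β^2))*β := by
          nlinarith [mul_le_mul_of_nonneg_right hγ3π hβ0.le]
        have h3 := Real.add_one_le_exp ((4*π/(1+β^2))*β)
        linarith
      have hEu : E*(1+3*π*β) ≤ 1 := by
        nlinarith [mul_le_mul_of_nonneg_left h1 hE0.le]
      have h := arithA1 π β E θ (Real.sin θ) (Real.cos θ) hπ hπ' hβ0 hle hβ2 hE0 hEu
        hθ0 ht4 hsθ hstθ hcθ
      nlinarith [h]
    · -- A2
      have hEb : E ≤ 1/5.99 := by
        have hx1 : 0.78*π ≤ (4*π/(1+β^2))*β := by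
          nlinarith [mul_le_mul_of_nonneg_right hγ3π hβ0.le,
            mul_le_mul_of_nonneg_left hgt.le (by positivity : (0:ℝ) ≤ 3*π)]
        have hx2 : Real.exp (0.78*π) ≤ Real.exp ((4*π/(1+β^2))*β) := Real.exp_le_exp.mpr hx1
        have hx3 : Real.exp (0.78*π) = Real.exp (0.26*π)^3 := by
          rw [← Real.exp_nat_mul]
          congr 1
          push_cast
          ring
        have hx4 : (1.8168:ℝ) ≤ Real.exp (0.26*π) := by
          have := Real.add_one_le_exp (0.26*π)
          nlinarith
        have hx5 : (5.99:ℝ) ≤ Real.exp (0.78*π) := by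
          rw [hx3]
          calc (5.99:ℝ) ≤ 1.8168^3 := by norm_num
            _ ≤ Real.exp (0.26*π)^3 := by
                apply pow_le_pow_left₀ (by norm_num) hx4
        have hx6 : (5.99:ℝ) ≤ Real.exp ((4*π/(1+β^2))*β) := le_trans hx5 hx2
        nlinarith
      have h := arithA2 π β E (Real.sin θ) (Real.cos θ) hπ hπ' hgt.le hβ2 hE0 hEb
        hsθ (by nlinarith : Real.sin θ ≤ 1) hcθ
      nlinarith [h]
  · -- Regime B : 1/√3 < β < 1
    have hβ0 : 0 < β := lt_trans (by positivity) hb1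
    have h3b : 1 < β * Real.sqrt 3 := by
      rw [show (1:ℝ)/Real.sqrt 3 = (Real.sqrt 3)⁻¹ by ring] at hb1
      calc (1:ℝ) = (Real.sqrt 3)⁻¹ * Real.sqrt 3 := (inv_mul_cancel₀ (ne_of_gt hsq3pos)).symm
        _ < β * Real.sqrt 3 := mul_lt_mul_of_pos_right hb1 hsq3pos
    have hβ2 : 1 < 3*β^2 := by nlinarith
    have hγgt : 2*π < 4*π/(1+β^2) := by
      rw [lt_div_iff₀ hDpos]
      nlinarith [mul_pos hπ0 (show (0:ℝ) < 1-β^2 by nlinarith)]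
    have hγlt : 4*π/(1+β^2) < 3*π := by
      rw [div_lt_iff₀ hDpos]
      nlinarith [mul_pos hπ0 (show (0:ℝ) < 3*β^2-1 by linarith)]
    have hsργ : Real.sin (4*π/(1+β^2)) = Real.sin (4*π/(1+β^2) - 2*π) :=
      (Real.sin_sub_two_pi _).symm
    have hsγ0 : 0 < Real.sin (4*π/(1+β^2)) := by
      rw [hsργ]
      exact Real.sin_pos_of_pos_of_lt_pi (by linarith) (by linarith)
    have hγβ5 : 5 < (4*π/(1+β^2))*β := by
      rw [div_mul_eq_mul_div, lt_div_iff₀ hDpos]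
      nlinarith [mul_pos (by linarith : (0:ℝ) < 3*β^2 - 1) (by linarith : (0:ℝ) < 1 - β),
        sq_nonneg (1-β)]
    have h6 : 6 < Real.exp ((4*π/(1+β^2))*β) := by
      have := Real.add_one_le_exp ((4*π/(1+β^2))*β)
      linarith
    have hE6 : E < 1/6 := by nlinarith
    exact ⟨ne_of_gt hsγ0,
      arithB π β E (Real.cos (4*π/(1+β^2))) (Real.sin (4*π/(1+β^2))) hπ hβ2 hb2 hβ0
        hE0 hE6 hc1 hsγ0 hs1⟩
  · -- Regime C : 1 < β < √3
    have hβ3 : β^2 < 3 := by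
      nlinarith [mul_lt_mul_of_pos_left hb2 (lt_trans zero_lt_one hb1 : (0:ℝ) < β),
        mul_lt_mul_of_pos_right hb2 hsq3pos]
    have hγ1 : π < 4*π/(1+β^2) := by
      rw [lt_div_iff₀ hDpos]
      nlinarith [mul_pos hπ0 (show (0:ℝ) < 3-β^2 by linarith)]
    have hγ2 : 4*π/(1+β^2) < 2*π := by
      rw [div_lt_iff₀ hDpos]
      nlinarith [mul_pos hπ0 (show (0:ℝ) < β^2-1 by nlinarith)]
    have hsneg : Real.sin (4*π/(1+β^2)) < 0 := by
      have h := Real.sin_pos_of_pos_of_lt_pi (x := 4*π/(1+β^2) - π) (by linarith) (by linarith)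
      have h2 : Real.sin (4*π/(1+β^2)) = -Real.sin (4*π/(1+β^2) - π) := by
        rw [← Real.sin_add_pi (4*π/(1+β^2) - π), sub_add_cancel]
      rw [h2]; linarith
    have hγβ5 : 5 < (4*π/(1+β^2))*β := by
      rw [div_mul_eq_mul_div, lt_div_iff₀ hDpos]
      nlinarith [mul_pos (by linarith : (0:ℝ) < β - 1) (by linarith : (0:ℝ) < 3 - β^2),
        sq_nonneg (β-1)]
    have h6 : 6 < Real.exp ((4*π/(1+β^2))*β) := by
      have := Real.add_one_le_exp ((4*π/(1+β^2))*β)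
      linarith
    have hE6 : E < 1/6 := by nlinarith
    exact ⟨ne_of_lt hsneg,
      arithC π β E (Real.cos (4*π/(1+β^2))) (Real.sin (4*π/(1+β^2))) hπ hb1 hβ3
        hE0 hE6 hc1 hsneg hs1⟩
end

section
/- Fix β > 0 and set z = 2π(β−i)/(1+β²). Then for every k ∈ [0,1] one has K(2kπ) = (1/2)·Im( e^{2kz} / (e^{2z} − 1) ) (note e^{2z} ≠ 1 since |e^{2z}| > 1). Consequently, for k ∈ (0,1), K(2kπ) = K(0) if and only if (e^{2kz} − 1)/(e^{2z} − 1) is a real number. -/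
open Real

/-- Fix `β > 0` and `z = 2π(β−i)/(1+β²)`. Then `e^{2z} ≠ 1`; for every `k ∈ [0,1]`,
`K(2kπ) = (1/2)·Im(e^{2kz}/(e^{2z}−1))`; and for `k ∈ (0,1)`, `K(2kπ) = K(0)` iff
`(e^{2kz}−1)/(e^{2z}−1)` is real. -/
theorem kernel_simplified_form (β : ℝ) (hβ : 0 < β) (z : ℂ)
    (hz : z = 2*(Real.pi:ℂ)*((β:ℂ) - Complex.I)/(1+(β:ℂ)^2)) :
    Complex.exp (2*z) ≠ 1 ∧
    (∀ k ∈ Set.Icc (0:ℝ) 1,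
      Kker β (2*k*Real.pi) =
        (1/2) * (Complex.exp (2*(k:ℂ)*z) / (Complex.exp (2*z) - 1)).im) ∧
    (∀ k ∈ Set.Ioo (0:ℝ) 1,
      (Kker β (2*k*Real.pi) = Kker β 0 ↔
        ((Complex.exp (2*(k:ℂ)*z) - 1) / (Complex.exp (2*z) - 1)).im = 0)) := by
  have hβ2 : (0:ℝ) < 1 + β^2 := by positivity
  have hne : (1:ℂ) + (β:ℂ)^2 ≠ 0 := by exact_mod_cast Complex.ofReal_ne_zero.mpr hβ2.ne'
  have hz' : z = ((2*Real.pi*β/(1+β^2) : ℝ):ℂ) - ((2*Real.pi/(1+β^2) : ℝ):ℂ) * Complex.I := by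
    rw [hz]; push_cast; field_simp
  have hre : (2*z).re = 2*(2*Real.pi*β/(1+β^2)) := by
    rw [hz']
    simp only [Complex.mul_re, Complex.sub_re, Complex.sub_im, Complex.ofReal_re,
      Complex.ofReal_im, Complex.mul_im, Complex.I_re, Complex.I_im, Complex.re_ofNat,
      Complex.im_ofNat]
    ring
  have hpos : 0 < (2*z).re := by
    rw [hre]; positivity
  have h1 : Complex.exp (2*z) ≠ 1 := by
    intro h
    have h2 : Real.exp ((2*z).re) = 1 := by
      have := Complex.norm_exp (2*z); rw [h] at this; simpa using this.symm
    rw [Real.exp_eq_one_iff] at h2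
    linarith
  have hD : Complex.exp (2*z) - 1 ≠ 0 := sub_ne_zero.mpr h1
  have hEne : Complex.exp z ≠ 0 := Complex.exp_ne_zero z
  have h2z : Complex.exp (2*z) = Complex.exp z * Complex.exp z := by
    rw [← Complex.exp_add]; ring_nf
  have key : ∀ k ∈ Set.Icc (0:ℝ) 1,
      Kker β (2*k*Real.pi) =
        (1/2) * (Complex.exp (2*(k:ℂ)*z) / (Complex.exp (2*z) - 1)).im := by
    intro k hk
    unfold Kker
    have hsin : Complex.sin (2*(Real.pi:ℂ)*(1+Complex.I*(β:ℂ))/(1+(β:ℂ)^2))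
        = Complex.sinh z * Complex.I := by
      rw [show 2*(Real.pi:ℂ)*(1+Complex.I*(β:ℂ))/(1+(β:ℂ)^2) = z * Complex.I from by
        rw [hz]; field_simp; linear_combination Complex.I_sq]
      exact Complex.sin_mul_I z
    have hexp : (2*((β:ℂ) - Complex.I)/(1+(β:ℂ)^2)) * (((2*k*Real.pi:ℝ):ℂ) - (Real.pi:ℂ))
        = 2*(k:ℂ)*z - z := by
      rw [hz]; push_cast; field_simp
    rw [hexp, hsin, Complex.exp_sub]
    have hD' : Complex.exp z * Complex.exp z - 1 ≠ 0 := by rw [← h2z]; exact hD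
    have hQ : (Complex.exp (2*(k:ℂ)*z)/Complex.exp z)/(Complex.sinh z * Complex.I)
        = -2*Complex.I*(Complex.exp (2*(k:ℂ)*z)/(Complex.exp (2*z)-1)) := by
      have hsinh : Complex.sinh z = (Complex.exp z - (Complex.exp z)⁻¹)/2 := by
        have h := Complex.two_sinh z
        rw [Complex.exp_neg] at h
        linear_combination h/2
      rw [hsinh, h2z]
      have hs : Complex.exp z - (Complex.exp z)⁻¹ ≠ 0 := by
        intro h
        apply hD'
        have := congrArg (· * Complex.exp z) h
        field_simp at this
        linear_combination this
      field_simp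
      rw [Complex.I_sq]; ring
    rw [hQ]
    generalize Complex.exp (2*(k:ℂ)*z)/(Complex.exp (2*z)-1) = u
    simp [Complex.mul_re, Complex.mul_im]
    ring
  refine ⟨h1, key, ?_⟩
  intro k hk
  have hKk := key k ⟨hk.1.le, hk.2.le⟩
  have hK0 : Kker β 0 = (1/2)*((1:ℂ)/(Complex.exp (2*z)-1)).im := by
    have h0 := key 0 ⟨le_refl 0, zero_le_one⟩
    norm_num at h0
    simpa using h0
  rw [hKk, hK0, sub_div, Complex.sub_im]
  constructor
  · intro h; rw [← sub_eq_zero] at h ⊢; linarith [h]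
  · intro h; nlinarith [h]
end

section
/- Fix β > 0. For every θ ∈ (0,2π), the second derivative K''(θ) vanishes if and only if K(θ) = β·K'(θ). -/
open Real

noncomputable def Eker (β θ : ℝ) : ℂ :=
  Complex.exp ((2*((β:ℂ) - Complex.I)/(1+(β:ℂ)^2)) * ((θ:ℂ) - (Real.pi:ℂ))) /
    Complex.sin (2*(Real.pi:ℂ)*(1+Complex.I*(β:ℂ))/(1+(β:ℂ)^2))

lemma Eker_hasDerivAt (β θ : ℝ) :
    HasDerivAt (Eker β) ((2*((β:ℂ) - Complex.I)/(1+(β:ℂ)^2)) * Eker β θ) θ := by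
  set w : ℂ := 2*((β:ℂ) - Complex.I)/(1+(β:ℂ)^2) with hw
  set S : ℂ := Complex.sin (2*(Real.pi:ℂ)*(1+Complex.I*(β:ℂ))/(1+(β:ℂ)^2)) with hS
  have h0 : HasDerivAt (fun x : ℝ => (x:ℂ)) 1 θ := Complex.ofRealCLM.hasDerivAt
  have h1 : HasDerivAt (fun x : ℝ => (x:ℂ) - (Real.pi:ℂ)) 1 θ := h0.sub_const _
  have h2 : HasDerivAt (fun x : ℝ => w * ((x:ℂ) - (Real.pi:ℂ))) (w * 1) θ := h1.const_mul w
  have h3 := h2.cexp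
  have h4 := h3.div_const S
  convert h4 using 1
  · rfl
  · rfl
  simp [Eker, hw, hS]
  ring

lemma Kd_hasDerivAt (β θ : ℝ) :
    HasDerivAt (Kd β)
      (((β^2-1) * (Eker β θ).re + 2*β*(Eker β θ).im) / (1+β^2)^2) θ := by
  have hE := Eker_hasDerivAt β θ
  have hre : HasDerivAt (fun x => (Eker β x).re)
      ((2*((β:ℂ) - Complex.I)/(1+(β:ℂ)^2)) * Eker β θ).re θ :=
    Complex.reCLM.hasFDerivAt.comp_hasDerivAt θ hE
  have him : HasDerivAt (fun x => (Eker β x).im)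
      ((2*((β:ℂ) - Complex.I)/(1+(β:ℂ)^2)) * Eker β θ).im θ :=
    Complex.imCLM.hasFDerivAt.comp_hasDerivAt θ hE
  have hKd : Kd β = fun x => (2*β/(1+β^2)) * ((1/4) * (Eker β x).re)
      + (1/(2*(1+β^2))) * (Eker β x).im := rfl
  rw [hKd]
  have h := (((hre.const_mul (1/4:ℝ)).const_mul (2*β/(1+β^2))).add
    (him.const_mul (1/(2*(1+β^2)))))
  convert h using 1
  · rfl
  · rfl
  · rfl
  -- value equality
  have hc : (1:ℝ) + β^2 ≠ 0 := by positivity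
  set z := Eker β θ
  have hwz : (2*((β:ℂ) - Complex.I)/(1+(β:ℂ)^2)) * z
      = (((2/(1+β^2) : ℝ)):ℂ) * (((β:ℂ) - Complex.I) * z) := by
    push_cast
    ring
  rw [hwz, Complex.re_ofReal_mul, Complex.im_ofReal_mul]
  simp [Complex.mul_re, Complex.mul_im]
  field_simp
  ring


/-- Fix `β > 0`. For every `θ ∈ (0,2π)`, `K''(θ) = 0` iff `K(θ) = β·K'(θ)`. -/
theorem second_deriv_vanishes_iff (β : ℝ) (hβ : 0 < β) :
    ∀ θ ∈ Set.Ioo (0:ℝ) (2*Real.pi),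
      (Kdd β θ = 0 ↔ Kker β θ = β * Kd β θ) := by
  intro θ _
  have hc : (1:ℝ) + β^2 ≠ 0 := by positivity
  have hKdd : Kdd β θ = ((β^2-1) * (Eker β θ).re + 2*β*(Eker β θ).im) / (1+β^2)^2 :=
    (Kd_hasDerivAt β θ).deriv
  set a := (Eker β θ).re
  set b := (Eker β θ).im
  have hK : Kker β θ = (1/4) * a := rfl
  have hKd : Kd β θ = (2*β/(1+β^2)) * ((1/4)*a) + (1/(2*(1+β^2))) * b := rfl
  have key : Kker β θ - β * Kd β θ = -((β^2-1)*a + 2*β*b)/(4*(1+β^2)) := by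
    rw [hK, hKd]; field_simp; ring
  rw [hKdd]
  rw [div_eq_zero_iff, or_iff_left (by positivity : ((1:ℝ)+β^2)^2 ≠ 0)]
  constructor
  · intro h
    have h2 : Kker β θ - β * Kd β θ = 0 := by rw [key, h]; simp
    linarith
  · intro h
    have h2 : -((β^2-1)*a + 2*β*b)/(4*(1+β^2)) = 0 := by rw [← key, h]; ring
    rcases div_eq_zero_iff.mp h2 with h4 | h4
    · linarith
    · exact absurd h4 (by positivity)
end

section
/- Fix β > 0 and suppose the equation K(θ) = K(0) has exactly three solutions in (0,2π), denoted θ₁ < θ₂ < θ₃. Then K'(+0) < 0, K'(θ₁) > 0, K'(θ₂) < 0, K'(θ₃) > 0, and K'(−0) < 0. -/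
open Real

section AuxVortex
open Complex
noncomputable def aa (β : ℝ) : ℝ := 2*β/(1+β^2)
noncomputable def bb (β : ℝ) : ℝ := 2/(1+β^2)
noncomputable def ww (β : ℝ) : ℂ := 2*((β:ℂ) - Complex.I)/(1+(β:ℂ)^2)
noncomputable def SS (β : ℝ) : ℂ :=
  Complex.sin (2*(Real.pi:ℂ)*(1+Complex.I*(β:ℂ))/(1+(β:ℂ)^2))
noncomputable def cc (β : ℝ) : ℂ := Complex.exp (-(Real.pi:ℂ) * ww β) / SS β

lemma den_pos (β : ℝ) : (0:ℝ) < 1 + β^2 := by positivity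

lemma den_ne (β : ℝ) : (1+(β:ℂ)^2) ≠ 0 := by
  have h : ((1+β^2 : ℝ) : ℂ) = 1+(β:ℂ)^2 := by push_cast; ring
  rw [← h]
  exact_mod_cast (den_pos β).ne'

lemma ww_eq (β : ℝ) : ww β = (aa β : ℂ) - (bb β : ℂ)*Complex.I := by
  unfold ww aa bb
  have h := den_ne β
  have h1 : (1:ℝ)+β^2 ≠ 0 := (den_pos β).ne'
  push_cast
  field_simp

lemma SS_eq (β : ℝ) : SS β =
    (Complex.exp ((Real.pi:ℂ)*ww β) - Complex.exp (-((Real.pi:ℂ)*ww β))) * Complex.I / 2 := by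
  have hA : 2*(Real.pi:ℂ)*(1+Complex.I*(β:ℂ))/(1+(β:ℂ)^2) = ((Real.pi:ℂ)*ww β)*Complex.I := by
    unfold ww
    rw [div_eq_iff (den_ne β), eq_comm]
    field_simp [den_ne β]
    linear_combination (-1:ℂ) * Complex.I_sq
  unfold SS
  rw [hA, Complex.sin]
  rw [show -((Real.pi:ℂ)*ww β*Complex.I)*Complex.I = (Real.pi:ℂ)*ww β by
    rw [neg_mul, mul_assoc, Complex.I_mul_I, mul_neg_one, neg_neg]]
  rw [show (Real.pi:ℂ)*ww β*Complex.I*Complex.I = -((Real.pi:ℂ)*ww β) by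
    rw [mul_assoc, Complex.I_mul_I, mul_neg_one]]

lemma SS_ne (β : ℝ) (hβ : 0 < β) : SS β ≠ 0 := by
  intro h
  rw [SS_eq] at h
  have h1 : Complex.exp ((Real.pi:ℂ)*ww β) = Complex.exp (-((Real.pi:ℂ)*ww β)) := by
    field_simp [Complex.I_ne_zero] at h
    exact sub_eq_zero.1 ((mul_eq_zero.1 (h.trans (mul_zero 2))).resolve_right Complex.I_ne_zero)
  have h2 : Complex.exp ((Real.pi:ℂ)*ww β - -((Real.pi:ℂ)*ww β)) = 1 := by
    rw [Complex.exp_sub, h1, div_self (Complex.exp_ne_zero _)]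
  obtain ⟨n, hn⟩ := Complex.exp_eq_one_iff.1 h2
  have h3 : ((Real.pi:ℂ)*ww β - -((Real.pi:ℂ)*ww β)).re = 2*Real.pi*aa β := by
    rw [ww_eq]
    simp [Complex.sub_re, Complex.mul_re]
    ring
  have h4 : (((n:ℂ)) * (2 * (Real.pi:ℂ) * Complex.I)).re = 0 := by
    simp [Complex.mul_re]
  rw [hn, h4] at h3
  have haa : 0 < aa β := by unfold aa; positivity
  nlinarith [Real.pi_pos]

lemma Kker_repr (β θ : ℝ) : Kker β θ = (cc β * Complex.exp (ww β * θ)).re / 4 := by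
  unfold Kker
  rw [show (2*((β:ℂ) - Complex.I)/(1+(β:ℂ)^2)) = ww β from rfl]
  rw [show Complex.sin (2*(Real.pi:ℂ)*(1+Complex.I*(β:ℂ))/(1+(β:ℂ)^2)) = SS β from rfl]
  have h : Complex.exp (ww β * ((θ:ℂ) - (Real.pi:ℂ))) / SS β = cc β * Complex.exp (ww β * θ) := by
    unfold cc
    rw [show ww β * ((θ:ℂ) - (Real.pi:ℂ)) = -(Real.pi:ℂ) * ww β + ww β * θ by ring,
      Complex.exp_add]
    ring
  rw [h]
  ring

lemma Kd_repr (β θ : ℝ) : Kd β θ = (ww β * (cc β * Complex.exp (ww β * θ))).re / 4 := by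
  unfold Kd
  rw [show (2*((β:ℂ) - Complex.I)/(1+(β:ℂ)^2)) = ww β from rfl]
  rw [show Complex.sin (2*(Real.pi:ℂ)*(1+Complex.I*(β:ℂ))/(1+(β:ℂ)^2)) = SS β from rfl]
  have h : Complex.exp (ww β * ((θ:ℂ) - (Real.pi:ℂ))) / SS β = cc β * Complex.exp (ww β * θ) := by
    unfold cc
    rw [show ww β * ((θ:ℂ) - (Real.pi:ℂ)) = -(Real.pi:ℂ) * ww β + ww β * θ by ring,
      Complex.exp_add]
    ring
  rw [h, Kker_repr β θ]
  set u := cc β * Complex.exp (ww β * θ) with hu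
  have h2 : (ww β * u).re = aa β * u.re + bb β * u.im := by
    rw [ww_eq]
    simp [Complex.mul_re, Complex.sub_re, Complex.sub_im]
  rw [h2]
  unfold aa bb
  have h1 : (1:ℝ)+β^2 ≠ 0 := (den_pos β).ne'
  field_simp
  ring

lemma Kker_hasDeriv (β θ : ℝ) : HasDerivAt (Kker β) (Kd β θ) θ := by
  have h1 : HasDerivAt (fun t : ℝ => ww β * (t:ℂ)) (ww β) θ := by
    simpa using (Complex.ofRealCLM.hasDerivAt (x := θ)).const_mul (ww β)
  have h2 := (h1.cexp).const_mul (cc β)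
  have h3 := (Complex.reCLM.hasFDerivAt.comp_hasDerivAt θ h2).div_const 4
  have h4 : Kker β = fun t : ℝ => (cc β * Complex.exp (ww β * t)).re / 4 :=
    funext fun t => Kker_repr β t
  rw [Kd_repr, h4]
  rw [show ww β * (cc β * Complex.exp (ww β * θ)) = cc β * (Complex.exp (ww β * θ) * ww β) by ring]
  exact (h3 : HasDerivAt (fun t : ℝ => (cc β * Complex.exp (ww β * t)).re / 4)
    ((cc β * (Complex.exp (ww β * θ) * ww β)).re / 4) θ)

lemma cz (β : ℝ) (hβ : 0 < β) :
    cc β * (Complex.exp (2*(Real.pi:ℂ)*ww β) - 1) = -2*Complex.I := by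
  have hS := SS_ne β hβ
  unfold cc
  rw [neg_mul, div_mul_eq_mul_div, div_eq_iff hS, SS_eq]
  have e1 : Complex.exp (-((Real.pi:ℂ)*ww β)) * Complex.exp (2*(Real.pi:ℂ)*ww β) =
      Complex.exp ((Real.pi:ℂ)*ww β) := by
    rw [← Complex.exp_add]; ring_nf
  rw [mul_sub, e1, mul_one]
  linear_combination (Complex.exp ((Real.pi:ℂ)*ww β) - Complex.exp (-((Real.pi:ℂ)*ww β))) *
    Complex.I_sq

lemma ww_ne (β : ℝ) (hβ : 0 < β) : ww β ≠ 0 := by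
  intro h
  have h2 := congrArg Complex.im h
  rw [ww_eq] at h2
  simp at h2
  have hb : 0 < bb β := by unfold bb; positivity
  exact hb.ne' h2

lemma cc_ne (β : ℝ) (hβ : 0 < β) : cc β ≠ 0 :=
  div_ne_zero (Complex.exp_ne_zero _) (SS_ne β hβ)

lemma Kker_2pi (β : ℝ) (hβ : 0 < β) : Kker β (2*Real.pi) = Kker β 0 := by
  rw [Kker_repr, Kker_repr]
  have hz : Complex.exp (ww β * ((2*Real.pi : ℝ):ℂ)) = Complex.exp (2*(Real.pi:ℂ)*ww β) := by
    congr 1; push_cast; ring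
  rw [hz]
  have h2 : cc β * Complex.exp (2*(Real.pi:ℂ)*ww β) = -2*Complex.I + cc β := by
    linear_combination (cz β hβ)
  rw [h2]
  simp [Complex.add_re]

lemma exp_split (β θ : ℝ) : Complex.exp (ww β * θ) =
    ((Real.exp (aa β * θ) : ℝ):ℂ) * Complex.exp (((-(bb β * θ) : ℝ):ℂ) * Complex.I) := by
  rw [ww_eq, show ((aa β:ℂ) - (bb β:ℂ)*Complex.I) * (θ:ℂ) =
    ((aa β * θ : ℝ):ℂ) + ((-(bb β * θ) : ℝ):ℂ)*Complex.I by push_cast; ring,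
    Complex.exp_add, Complex.ofReal_exp]

lemma Kd_cos (β θ : ℝ) : Kd β θ =
    (‖ww β * cc β‖ * Real.exp (aa β * θ) / 4) *
      Real.cos (Complex.arg (ww β * cc β) - bb β * θ) := by
  rw [Kd_repr]
  have h1 : ww β * (cc β * Complex.exp (ww β * θ)) =
      ((‖ww β * cc β‖ : ℝ):ℂ) * (((Real.exp (aa β * θ) : ℝ):ℂ) *
        Complex.exp (((Complex.arg (ww β * cc β) - bb β * θ : ℝ):ℂ) * Complex.I)) := by
    conv_lhs => rw [show ww β * (cc β * Complex.exp (ww β * θ)) =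
      (ww β * cc β) * Complex.exp (ww β * θ) by ring,
      ← Complex.norm_mul_exp_arg_mul_I (ww β * cc β), exp_split β θ]
    rw [show ((Complex.arg (ww β * cc β) - bb β * θ : ℝ):ℂ) =
      ((Complex.arg (ww β * cc β) : ℝ):ℂ) + ((-(bb β * θ) : ℝ):ℂ) by push_cast; ring,
      add_mul, Complex.exp_add]
    ring
  rw [h1]
  rw [show ((‖ww β * cc β‖ : ℝ):ℂ) * (((Real.exp (aa β * θ) : ℝ):ℂ) *
      Complex.exp (((Complex.arg (ww β * cc β) - bb β * θ : ℝ):ℂ) * Complex.I)) =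
    ((‖ww β * cc β‖ * Real.exp (aa β * θ) : ℝ):ℂ) *
      Complex.exp (((Complex.arg (ww β * cc β) - bb β * θ : ℝ):ℂ) * Complex.I) by
        push_cast; ring]
  rw [Complex.re_ofReal_mul, Complex.exp_ofReal_mul_I_re]
  ring

lemma Kd_2pi_neg (β : ℝ) (hβ : 0 < β) (hb : 3/2 < bb β) : Kd β (2*Real.pi) < 0 := by
  have hπ := Real.pi_pos
  have hb2 : bb β < 2 := by
    unfold bb
    rw [div_lt_iff₀ (den_pos β)]
    nlinarith
  have haa : 0 < aa β := by unfold aa; positivity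
  have hbb : 0 < bb β := by unfold bb; positivity
  rw [Kd_repr]
  set z := Complex.exp (ww β * ((2*Real.pi : ℝ):ℂ)) with hzdef
  set t := 2*Real.pi*bb β with htdef
  set E := Real.exp (2*Real.pi*aa β) with hEdef
  have e2 : aa β * (2*Real.pi) = 2*Real.pi*aa β := by ring
  have e3 : -(bb β * (2*Real.pi)) = -t := by rw [htdef]; ring
  have hzr : z = ((E : ℝ):ℂ) * Complex.exp (((-t : ℝ):ℂ) * Complex.I) := by
    rw [hzdef, exp_split β (2*Real.pi), e2, e3]
  have hx : z.re = E * Real.cos t := by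
    rw [hzr, Complex.re_ofReal_mul, Complex.exp_ofReal_mul_I_re, Real.cos_neg]
  have hy : z.im = -(E * Real.sin t) := by
    rw [hzr, Complex.im_ofReal_mul, Complex.exp_ofReal_mul_I_im, Real.sin_neg]
    ring
  have hcz := cz β hβ
  have hz2 : Complex.exp (2*(Real.pi:ℂ)*ww β) = z := by
    rw [hzdef]; congr 1; push_cast; ring
  rw [hz2] at hcz
  -- Multiply by normSq (z-1)
  have key : (ww β * (cc β * z)).re * Complex.normSq (z - 1) =
      (-2*Complex.I * ww β * z * (starRingEnd ℂ) (z-1)).re := by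
    have h5 : (ww β * (cc β * z)) * ((z-1) * (starRingEnd ℂ) (z-1)) =
        -2*Complex.I * ww β * z * (starRingEnd ℂ) (z-1) := by
      linear_combination (ww β * z * (starRingEnd ℂ) (z-1)) * hcz
    calc (ww β * (cc β * z)).re * Complex.normSq (z - 1)
        = (((Complex.normSq (z-1) : ℝ):ℂ) * (ww β * (cc β * z))).re := by
          rw [Complex.re_ofReal_mul]; ring
      _ = (-2*Complex.I * ww β * z * (starRingEnd ℂ) (z-1)).re := by
          rw [← Complex.mul_conj (z-1)]
          congr 1
          linear_combination h5
  have hre : (-2*Complex.I * ww β * z * (starRingEnd ℂ) (z-1)).re =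
      2*((aa β * z.im - bb β * z.re)*(z.re - 1) - (aa β * z.re + bb β * z.im)*z.im) := by
    rw [ww_eq]
    simp [Complex.mul_re, Complex.mul_im, Complex.sub_re, Complex.sub_im, Complex.conj_re,
      Complex.conj_im, map_sub, map_one]
    ring
  -- positivity of normSq (z-1)
  have hz1 : z ≠ 1 := by
    intro h
    rw [h, sub_self, mul_zero] at hcz
    have := congrArg Complex.im hcz
    simp at this
  have hns : 0 < Complex.normSq (z-1) := by
    rw [Complex.normSq_pos]
    exact sub_ne_zero.2 hz1
  -- sin t < 0, E > 1
  have ht3 : 3*Real.pi < t := by rw [htdef]; nlinarith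
  have ht4 : t < 4*Real.pi := by rw [htdef]; nlinarith
  have hsin : Real.sin t < 0 := by
    have h1 : Real.sin (t - 2*Real.pi) = Real.sin t := Real.sin_sub_two_pi t
    have h2 : Real.sin (t - 2*Real.pi - Real.pi) = -Real.sin (t - 2*Real.pi) :=
      Real.sin_sub_pi _
    have h3 : 0 < Real.sin (t - 2*Real.pi - Real.pi) :=
      Real.sin_pos_of_pos_of_lt_pi (by nlinarith) (by nlinarith)
    nlinarith
  have hE : 1 < E := by
    rw [hEdef, show (1:ℝ) = Real.exp 0 from Real.exp_zero.symm]
    exact Real.exp_lt_exp.2 (by positivity)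
  have hEc : Real.cos t < E := lt_of_le_of_lt (Real.cos_le_one t) hE
  -- conclude
  have hEpos : 0 < E := by rw [hEdef]; positivity
  have hfinal : (ww β * (cc β * z)).re < 0 := by
    have hrhs : (-2*Complex.I * ww β * z * (starRingEnd ℂ) (z-1)).re < 0 := by
      rw [hre, hx, hy]
      have heq : Real.sin t^2 + Real.cos t^2 = 1 := Real.sin_sq_add_cos_sq t
      have hkey2 : 2*((aa β * -(E*Real.sin t) - bb β * (E*Real.cos t))*(E*Real.cos t - 1) -
          (aa β * (E*Real.cos t) + bb β * -(E*Real.sin t)) * -(E*Real.sin t)) =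
          2*E*(aa β * Real.sin t - bb β * (E - Real.cos t)) := by
        linear_combination (-(2*E^2*bb β)) * heq
      have hR : 2*E*(aa β * Real.sin t - bb β * (E - Real.cos t)) < 0 := by
        nlinarith [mul_pos haa (neg_pos.2 hsin), mul_pos hbb (sub_pos.2 hEc)]
      linarith [hkey2]
    nlinarith [key]
  linarith



section Helpers
open Set Filter Topology

lemma cos_zero_gap {x y : ℝ} (hx : Real.cos x = 0) (hy : Real.cos y = 0) (h : x < y) :
    x + Real.pi ≤ y := by
  obtain ⟨m, rfl⟩ := Real.cos_eq_zero_iff.1 hx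
  obtain ⟨n, rfl⟩ := Real.cos_eq_zero_iff.1 hy
  have hπ := Real.pi_pos
  have hmn : m < n := by
    by_contra h'
    push_neg at h'
    have : (n:ℝ) ≤ m := by exact_mod_cast h'
    nlinarith
  have h1 : (m:ℝ) + 1 ≤ n := by exact_mod_cast hmn
  nlinarith

lemma five_points {b φ : ℝ} (hb : 0 < b) (hb2 : b < 2) {p1 p2 p3 p4 p5 : ℝ}
    (h12 : p1 < p2) (h23 : p2 < p3) (h34 : p3 < p4) (h45 : p4 < p5)
    (hr : p5 - p1 ≤ 2*Real.pi)
    (c1 : Real.cos (φ - b*p1) = 0) (c2 : Real.cos (φ - b*p2) = 0)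
    (c3 : Real.cos (φ - b*p3) = 0) (c4 : Real.cos (φ - b*p4) = 0)
    (c5 : Real.cos (φ - b*p5) = 0) : False := by
  have hπ := Real.pi_pos
  have g1 := cos_zero_gap c2 c1 (by nlinarith)
  have g2 := cos_zero_gap c3 c2 (by nlinarith)
  have g3 := cos_zero_gap c4 c3 (by nlinarith)
  have g4 := cos_zero_gap c5 c4 (by nlinarith)
  nlinarith

lemma four_points {b φ : ℝ} (hb : 0 < b) {p1 p2 p3 p4 : ℝ}
    (h12 : p1 < p2) (h23 : p2 < p3) (h34 : p3 < p4)
    (c1 : Real.cos (φ - b*p1) = 0) (c2 : Real.cos (φ - b*p2) = 0)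
    (c3 : Real.cos (φ - b*p3) = 0) (c4 : Real.cos (φ - b*p4) = 0) :
    3*Real.pi ≤ b*(p4 - p1) := by
  have g1 := cos_zero_gap c2 c1 (by nlinarith)
  have g2 := cos_zero_gap c3 c2 (by nlinarith)
  have g3 := cos_zero_gap c4 c3 (by nlinarith)
  nlinarith

lemma exists_left_pos {G : ℝ → ℝ} {t d α : ℝ} (h : HasDerivAt G d t) (hd : d < 0)
    (h0 : G t = 0) (hα : α < t) : ∃ s ∈ Ioo α t, 0 < G s := by
  rw [hasDerivAt_iff_tendsto_slope] at h
  have h2 : ∀ᶠ s in 𝓝[≠] t, slope G t s < 0 := h.eventually (eventually_lt_nhds hd)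
  have h3 : ∀ᶠ s in 𝓝[<] t, slope G t s < 0 :=
    h2.filter_mono (nhdsWithin_mono t fun x hx => ne_of_lt hx)
  have h4 : ∀ᶠ s in 𝓝[<] t, s ∈ Ioo α t :=
    eventually_of_mem (Ioo_mem_nhdsLT_of_mem ⟨hα, le_refl t⟩) fun x hx => hx
  obtain ⟨s, hs1, hs2⟩ := (h3.and h4).exists
  refine ⟨s, hs2, ?_⟩
  rw [slope_def_field, h0, sub_zero] at hs1
  rcases div_neg_iff.1 hs1 with ⟨hp, hq⟩ | ⟨hp, hq⟩
  · exact hp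
  · linarith [hs2.2]

lemma exists_right_neg {G : ℝ → ℝ} {t d γ : ℝ} (h : HasDerivAt G d t) (hd : d < 0)
    (h0 : G t = 0) (hγ : t < γ) : ∃ s ∈ Ioo t γ, G s < 0 := by
  rw [hasDerivAt_iff_tendsto_slope] at h
  have h2 : ∀ᶠ s in 𝓝[≠] t, slope G t s < 0 := h.eventually (eventually_lt_nhds hd)
  have h3 : ∀ᶠ s in 𝓝[>] t, slope G t s < 0 :=
    h2.filter_mono (nhdsWithin_mono t fun x hx => ne_of_gt hx)
  have h4 : ∀ᶠ s in 𝓝[>] t, s ∈ Ioo t γ :=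
    eventually_of_mem (Ioo_mem_nhdsGT_of_mem ⟨le_refl t, hγ⟩) fun x hx => hx
  obtain ⟨s, hs1, hs2⟩ := (h3.and h4).exists
  refine ⟨s, hs2, ?_⟩
  rw [slope_def_field, h0, sub_zero] at hs1
  rcases div_neg_iff.1 hs1 with ⟨hp, hq⟩ | ⟨hp, hq⟩
  · linarith [hs2.1]
  · exact hp

lemma pos_on {G : ℝ → ℝ} {α γ : ℝ} (hc : Continuous G)
    (hne : ∀ x ∈ Ioo α γ, G x ≠ 0) (hs : ∃ s ∈ Ioo α γ, 0 < G s) :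
    ∀ x ∈ Ioo α γ, 0 < G x := by
  obtain ⟨s, hsm, hspos⟩ := hs
  intro x hx
  by_contra hnp
  have hneg : G x < 0 := lt_of_le_of_ne (not_lt.1 hnp) (hne x hx)
  rcases lt_or_ge x s with hxs | hsx
  · obtain ⟨z, hz1, hz2⟩ := intermediate_value_Icc (le_of_lt hxs) hc.continuousOn
      (⟨le_of_lt hneg, le_of_lt hspos⟩ : (0:ℝ) ∈ Icc (G x) (G s))
    exact hne z ⟨lt_of_lt_of_le hx.1 hz1.1, lt_of_le_of_lt hz1.2 hsm.2⟩ hz2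
  · have hsx' : s < x := lt_of_le_of_ne hsx (by rintro rfl; linarith)
    obtain ⟨z, hz1, hz2⟩ := intermediate_value_Icc' (le_of_lt hsx') hc.continuousOn
      (⟨le_of_lt hneg, le_of_lt hspos⟩ : (0:ℝ) ∈ Icc (G x) (G s))
    exact hne z ⟨lt_of_lt_of_le hsm.1 hz1.1, lt_of_le_of_lt hz1.2 hx.2⟩ hz2


end Helpers


end AuxVortex

open Set Filter Topology in
/-- Fix `β > 0` and suppose `K(θ) = K(0)` has exactly three solutions
`θ₁ < θ₂ < θ₃` in `(0,2π)`. Then `K'(+0) < 0`, `K'(θ₁) > 0`, `K'(θ₂) < 0`,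
`K'(θ₃) > 0`, and `K'(−0) < 0`. -/
theorem sign_of_Kd_at_solutions (β : ℝ) (hβ : 0 < β) (θ₁ θ₂ θ₃ : ℝ)
    (h12 : θ₁ < θ₂) (h23 : θ₂ < θ₃)
    (hset : {θ : ℝ | θ ∈ Set.Ioo 0 (2*Real.pi) ∧ Kker β θ = Kker β 0} = {θ₁, θ₂, θ₃}) :
    Kd β 0 < 0 ∧ 0 < Kd β θ₁ ∧ Kd β θ₂ < 0 ∧ 0 < Kd β θ₃ ∧ Kd β (2*Real.pi) < 0 := by
  have hπ := Real.pi_pos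
  have hbb : 0 < bb β := by unfold bb; positivity
  have hb2 : bb β < 2 := by
    unfold bb
    rw [div_lt_iff₀ (den_pos β)]
    nlinarith
  -- memberships
  have hm1 : θ₁ ∈ Set.Ioo 0 (2*Real.pi) ∧ Kker β θ₁ = Kker β 0 := by
    have h : θ₁ ∈ ({θ₁, θ₂, θ₃} : Set ℝ) := by simp
    rw [← hset] at h; exact h
  have hm2 : θ₂ ∈ Set.Ioo 0 (2*Real.pi) ∧ Kker β θ₂ = Kker β 0 := by
    have h : θ₂ ∈ ({θ₁, θ₂, θ₃} : Set ℝ) := by simp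
    rw [← hset] at h; exact h
  have hm3 : θ₃ ∈ Set.Ioo 0 (2*Real.pi) ∧ Kker β θ₃ = Kker β 0 := by
    have h : θ₃ ∈ ({θ₁, θ₂, θ₃} : Set ℝ) := by simp
    rw [← hset] at h; exact h
  have honly : ∀ x, x ∈ Set.Ioo 0 (2*Real.pi) → Kker β x = Kker β 0 →
      x = θ₁ ∨ x = θ₂ ∨ x = θ₃ := by
    intro x hx he
    have h : x ∈ ({θ₁, θ₂, θ₃} : Set ℝ) := by rw [← hset]; exact ⟨hx, he⟩
    simpa using h
  -- continuity / derivative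
  have hKcont : Continuous (Kker β) :=
    continuous_iff_continuousAt.2 fun t => (Kker_hasDeriv β t).continuousAt
  -- Rolle points
  obtain ⟨s₀, hs₀m, hs₀⟩ := exists_hasDerivAt_eq_zero (f' := Kd β) hm1.1.1
    hKcont.continuousOn hm1.2.symm (fun x _ => Kker_hasDeriv β x)
  obtain ⟨s₁, hs₁m, hs₁⟩ := exists_hasDerivAt_eq_zero (f' := Kd β) h12
    hKcont.continuousOn (hm1.2.trans hm2.2.symm) (fun x _ => Kker_hasDeriv β x)
  obtain ⟨s₂, hs₂m, hs₂⟩ := exists_hasDerivAt_eq_zero (f' := Kd β) h23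
    hKcont.continuousOn (hm2.2.trans hm3.2.symm) (fun x _ => Kker_hasDeriv β x)
  obtain ⟨s₃, hs₃m, hs₃⟩ := exists_hasDerivAt_eq_zero (f' := Kd β) hm3.1.2
    hKcont.continuousOn (hm3.2.trans (Kker_2pi β hβ).symm) (fun x _ => Kker_hasDeriv β x)
  -- cosine zeros
  have hcoszero : ∀ x : ℝ, Kd β x = 0 →
      Real.cos (Complex.arg (ww β * cc β) - bb β * x) = 0 := by
    intro x hx
    rw [Kd_cos] at hx
    rcases mul_eq_zero.1 hx with h | h
    · have hpos : 0 < ‖ww β * cc β‖ * Real.exp (aa β * x) / 4 := by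
        have : 0 < ‖ww β * cc β‖ :=
          norm_pos_iff.mpr (mul_ne_zero (ww_ne β hβ) (cc_ne β hβ))
        positivity
      exact absurd h hpos.ne'
    · exact h
  have z₀ := hcoszero s₀ hs₀
  have z₁ := hcoszero s₁ hs₁
  have z₂ := hcoszero s₂ hs₂
  have z₃ := hcoszero s₃ hs₃
  -- b > 3/2
  have hord1 : s₀ < s₁ := lt_trans hs₀m.2 hs₁m.1
  have hord2 : s₁ < s₂ := lt_trans hs₁m.2 hs₂m.1
  have hord3 : s₂ < s₃ := lt_trans hs₂m.2 hs₃m.1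
  have hb32 : 3/2 < bb β := by
    have h4 := four_points hbb hord1 hord2 hord3 z₀ z₁ z₂ z₃
    have : s₃ - s₀ < 2*Real.pi := by
      have := hs₀m.1
      have := hs₃m.2
      linarith [hm1.1.1]
    nlinarith
  have hKd2π : Kd β (2*Real.pi) < 0 := Kd_2pi_neg β hβ hb32
  -- derivative nonzero at special points
  have hne0 : Kd β 0 ≠ 0 := fun h =>
    five_points hbb hb2 hs₀m.1 hord1 hord2 hord3
      (by linarith [hs₃m.2]) (hcoszero 0 h) z₀ z₁ z₂ z₃
  have hneθ₁ : Kd β θ₁ ≠ 0 := fun h =>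
    five_points hbb hb2 hs₀m.2 hs₁m.1 hord2 hord3
      (by linarith [hs₀m.1, hs₃m.2]) z₀ (hcoszero θ₁ h) z₁ z₂ z₃
  have hneθ₂ : Kd β θ₂ ≠ 0 := fun h =>
    five_points hbb hb2 hord1 hs₁m.2 hs₂m.1 hord3
      (by linarith [hs₀m.1, hs₃m.2]) z₀ z₁ (hcoszero θ₂ h) z₂ z₃
  have hneθ₃ : Kd β θ₃ ≠ 0 := fun h =>
    five_points hbb hb2 hord1 hord2 hs₂m.2 hs₃m.1
      (by linarith [hs₀m.1, hs₃m.2]) z₀ z₁ z₂ (hcoszero θ₃ h) z₃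
  -- G and its properties
  set G : ℝ → ℝ := fun x => Kker β x - Kker β 0 with hGdef
  have hGd : ∀ t : ℝ, HasDerivAt G (Kd β t) t := fun t => (Kker_hasDeriv β t).sub_const _
  have hGcont : Continuous G := hKcont.sub continuous_const
  have hG0 : G 0 = 0 := by simp [hGdef]
  have hG1 : G θ₁ = 0 := by simp [hGdef, hm1.2]
  have hG2 : G θ₂ = 0 := by simp [hGdef, hm2.2]
  have hG3 : G θ₃ = 0 := by simp [hGdef, hm3.2]
  have hG2π : G (2*Real.pi) = 0 := by simp [hGdef, Kker_2pi β hβ]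
  have hθ₁0 : 0 < θ₁ := hm1.1.1
  have hθ₃2π : θ₃ < 2*Real.pi := hm3.1.2
  have hGne : ∀ x ∈ Set.Ioo 0 (2*Real.pi), x ≠ θ₁ → x ≠ θ₂ → x ≠ θ₃ → G x ≠ 0 := by
    intro x hx n1 n2 n3 h
    have he : Kker β x = Kker β 0 := by
      have := sub_eq_zero.1 h
      exact this
    rcases honly x hx he with h' | h' | h' <;> [exact n1 h'; exact n2 h'; exact n3 h']
  have hne4 : ∀ x ∈ Set.Ioo θ₃ (2*Real.pi), G x ≠ 0 := by
    intro x hx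
    exact hGne x ⟨by linarith [hx.1, hm1.1.1, h12, h23], hx.2⟩
      (by intro h; rw [h] at hx; linarith [hx.1])
      (by intro h; rw [h] at hx; linarith [hx.1])
      (by intro h; rw [h] at hx; exact lt_irrefl _ hx.1)
  have hne3 : ∀ x ∈ Set.Ioo θ₂ θ₃, G x ≠ 0 := by
    intro x hx
    exact hGne x ⟨by linarith [hx.1, hm1.1.1, h12], by linarith [hx.2, hθ₃2π]⟩
      (by intro h; rw [h] at hx; linarith [hx.1])
      (by intro h; rw [h] at hx; exact lt_irrefl _ hx.1)
      (by intro h; rw [h] at hx; exact lt_irrefl _ hx.2)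
  have hne2 : ∀ x ∈ Set.Ioo θ₁ θ₂, G x ≠ 0 := by
    intro x hx
    exact hGne x ⟨by linarith [hx.1, hθ₁0], by linarith [hx.2, h23, hθ₃2π]⟩
      (by intro h; rw [h] at hx; exact lt_irrefl _ hx.1)
      (by intro h; rw [h] at hx; exact lt_irrefl _ hx.2)
      (by intro h; rw [h] at hx; linarith [hx.2])
  have hne1 : ∀ x ∈ Set.Ioo 0 θ₁, G x ≠ 0 := by
    intro x hx
    exact hGne x ⟨hx.1, by linarith [hx.2, h12, h23, hθ₃2π]⟩
      (by intro h; rw [h] at hx; exact lt_irrefl _ hx.2)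
      (by intro h; rw [h] at hx; linarith [hx.2])
      (by intro h; rw [h] at hx; linarith [hx.2])
  -- sign propagation
  have P₄ : ∀ x ∈ Set.Ioo θ₃ (2*Real.pi), 0 < G x :=
    pos_on hGcont hne4 (exists_left_pos (hGd (2*Real.pi)) hKd2π hG2π hθ₃2π)
  have hKdθ₃pos : 0 < Kd β θ₃ := by
    rcases hneθ₃.lt_or_gt with hneg | hpos
    · obtain ⟨s, hsm, hsneg⟩ := exists_right_neg (hGd θ₃) hneg hG3 hθ₃2π
      linarith [P₄ s hsm]
    · exact hpos
  have N₃ : ∀ x ∈ Set.Ioo θ₂ θ₃, G x < 0 := by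
    have hseed : ∃ s ∈ Set.Ioo θ₂ θ₃, 0 < (-G) s := by
      obtain ⟨s, hsm, hs⟩ := exists_left_pos (G := -G) ((hGd θ₃).neg)
        (by simpa using hKdθ₃pos) (by simp [hG3]) h23
      exact ⟨s, hsm, by simpa using hs⟩
    have := pos_on (G := -G) hGcont.neg
      (fun x hx => by simpa using hne3 x hx) hseed
    intro x hx
    have := this x hx
    simp only [Pi.neg_apply] at this
    linarith
  have hKdθ₂neg : Kd β θ₂ < 0 := by
    rcases hneθ₂.lt_or_gt with hneg | hpos
    · exact hneg
    · obtain ⟨s, hsm, hsneg⟩ := exists_right_neg (G := -G) ((hGd θ₂).neg)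
        (by simpa using hpos) (by simp [hG2]) h23
      simp only [Pi.neg_apply] at hsneg
      linarith [N₃ s hsm]
  have P₂ : ∀ x ∈ Set.Ioo θ₁ θ₂, 0 < G x :=
    pos_on hGcont hne2 (exists_left_pos (hGd θ₂) hKdθ₂neg hG2 h12)
  have hKdθ₁pos : 0 < Kd β θ₁ := by
    rcases hneθ₁.lt_or_gt with hneg | hpos
    · obtain ⟨s, hsm, hsneg⟩ := exists_right_neg (hGd θ₁) hneg hG1 h12
      linarith [P₂ s hsm]
    · exact hpos
  have N₁ : ∀ x ∈ Set.Ioo 0 θ₁, G x < 0 := by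
    have hseed : ∃ s ∈ Set.Ioo 0 θ₁, 0 < (-G) s := by
      obtain ⟨s, hsm, hs⟩ := exists_left_pos (G := -G) ((hGd θ₁).neg)
        (by simpa using hKdθ₁pos) (by simp [hG1]) hθ₁0
      exact ⟨s, hsm, by simpa using hs⟩
    have := pos_on (G := -G) hGcont.neg
      (fun x hx => by simpa using hne1 x hx) hseed
    intro x hx
    have := this x hx
    simp only [Pi.neg_apply] at this
    linarith
  have hKd0neg : Kd β 0 < 0 := by
    rcases hne0.lt_or_gt with hneg | hpos
    · exact hneg
    · obtain ⟨s, hsm, hsneg⟩ := exists_right_neg (G := -G) ((hGd 0).neg)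
        (by simpa using hpos) (by simp [hG0]) hθ₁0
      simp only [Pi.neg_apply] at hsneg
      linarith [N₁ s hsm]
  exact ⟨hKd0neg, hKdθ₁pos, hKdθ₂neg, hKdθ₃pos, hKd2π⟩
end

section
/- Fix β > 0 and assume there exists α ∈ (π,2π) such that K'(θ) > K'(0) for all θ ∈ (0,α), K'(α) = K'(0), and K'(θ) < K'(0) for all θ ∈ (α,2π). Then for every θ ∈ (0, 2π−α) one has K(2π−θ) − K(0) > −K'(0)·θ > K(0) − K(θ); in particular K(2π−θ) − K(0) > 0 and (K(θ)−K(0))/(K(2π−θ)−K(0)) > −1. -/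
open Real

namespace R2aux

noncomputable def w (β : ℝ) : ℂ := 2*((β:ℂ) - Complex.I)/(1+(β:ℂ)^2)
noncomputable def S (β : ℝ) : ℂ :=
  Complex.sin (2*(Real.pi:ℂ)*(1+Complex.I*(β:ℂ))/(1+(β:ℂ)^2))
noncomputable def u (β θ : ℝ) : ℂ := Complex.exp (w β * ((θ:ℂ) - (Real.pi:ℂ))) / S β

noncomputable def xx (β : ℝ) : ℝ := 2*Real.pi*β/(1+β^2)
noncomputable def yy (β : ℝ) : ℝ := 2*Real.pi/(1+β^2)
noncomputable def NN (β : ℝ) : ℝ :=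
  (Real.sin (yy β) * Real.cosh (xx β))^2 + (Real.cos (yy β) * Real.sinh (xx β))^2

lemma Kker_eq_u (β θ : ℝ) : Kker β θ = (1/4) * (u β θ).re := rfl
lemma Kd_eq_u (β θ : ℝ) : Kd β θ = (2*β/(1+β^2)) * Kker β θ + (1/(2*(1+β^2))) * (u β θ).im := rfl

lemma hden (β : ℝ) : (1+(β:ℂ)^2) ≠ 0 := by
  rw [show (1+(β:ℂ)^2) = ((1+β^2 : ℝ):ℂ) by push_cast; ring, Complex.ofReal_ne_zero]
  positivity

lemma Sarg (β : ℝ) :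
    2*(Real.pi:ℂ)*(1+Complex.I*(β:ℂ))/(1+(β:ℂ)^2) = ((yy β : ℝ):ℂ) + ((xx β : ℝ):ℂ)*Complex.I := by
  have h := hden β
  unfold xx yy
  push_cast
  field_simp

lemma warg (β θ : ℝ) :
    w β * ((θ:ℂ) - (Real.pi:ℂ)) =
      ((2*β*(θ-Real.pi)/(1+β^2) : ℝ):ℂ) + ((2*(Real.pi-θ)/(1+β^2) : ℝ):ℂ)*Complex.I := by
  have h := hden β
  unfold w
  push_cast
  field_simp
  ring

lemma Sval (β : ℝ) : S β = ((Real.sin (yy β) * Real.cosh (xx β) : ℝ):ℂ) +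
    ((Real.cos (yy β) * Real.sinh (xx β) : ℝ):ℂ) * Complex.I := by
  unfold S
  rw [Sarg, Complex.sin_add_mul_I]
  push_cast
  ring

lemma S_re (β : ℝ) : (S β).re = Real.sin (yy β) * Real.cosh (xx β) := by
  rw [Sval]
  simp only [Complex.add_re, Complex.ofReal_re, Complex.mul_re, Complex.ofReal_im,
    Complex.I_re, Complex.I_im, mul_zero, mul_one, zero_mul, sub_zero, add_zero, zero_add,
    zero_sub, neg_zero]

lemma S_im (β : ℝ) : (S β).im = Real.cos (yy β) * Real.sinh (xx β) := by
  rw [Sval]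
  simp only [Complex.add_im, Complex.ofReal_im, Complex.mul_im, Complex.ofReal_re,
    Complex.I_re, Complex.I_im, mul_zero, mul_one, zero_mul, sub_zero, add_zero, zero_add,
    zero_sub, neg_zero]

lemma u_re (β θ : ℝ) : (u β θ).re =
    Real.exp (2*β*(θ-Real.pi)/(1+β^2)) *
      (Real.cos (2*(Real.pi-θ)/(1+β^2)) * (Real.sin (yy β) * Real.cosh (xx β)) +
       Real.sin (2*(Real.pi-θ)/(1+β^2)) * (Real.cos (yy β) * Real.sinh (xx β))) / NN β := by
  unfold u
  rw [Complex.div_re, Complex.normSq_apply, S_re, S_im, warg, Complex.exp_re, Complex.exp_im]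
  simp only [Complex.add_re, Complex.add_im, Complex.ofReal_re, Complex.ofReal_im,
    Complex.mul_re, Complex.mul_im, Complex.I_re, Complex.I_im, mul_zero, mul_one,
    zero_mul, sub_zero, zero_sub, add_zero, zero_add, neg_zero]
  unfold NN
  ring

lemma u_im (β θ : ℝ) : (u β θ).im =
    Real.exp (2*β*(θ-Real.pi)/(1+β^2)) *
      (Real.sin (2*(Real.pi-θ)/(1+β^2)) * (Real.sin (yy β) * Real.cosh (xx β)) -
       Real.cos (2*(Real.pi-θ)/(1+β^2)) * (Real.cos (yy β) * Real.sinh (xx β))) / NN β := by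
  unfold u
  rw [Complex.div_im, Complex.normSq_apply, S_re, S_im, warg, Complex.exp_re, Complex.exp_im]
  simp only [Complex.add_re, Complex.add_im, Complex.ofReal_re, Complex.ofReal_im,
    Complex.mul_re, Complex.mul_im, Complex.I_re, Complex.I_im, mul_zero, mul_one,
    zero_mul, sub_zero, zero_sub, add_zero, zero_add, neg_zero]
  unfold NN
  ring

lemma xx_pos (β : ℝ) (hβ : 0 < β) : 0 < xx β := by
  have := Real.pi_pos; unfold xx; positivity

lemma yy_pos (β : ℝ) : 0 < yy β := by
  have := Real.pi_pos; unfold yy; positivity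

lemma NN_pos (β : ℝ) (hβ : 0 < β) : 0 < NN β := by
  have hx := xx_pos β hβ
  have hsh : 0 < Real.sinh (xx β) := Real.sinh_pos_iff.2 hx
  have hs := Real.sin_sq_add_cos_sq (yy β)
  have hc2 := Real.cosh_sq_sub_sinh_sq (xx β)
  unfold NN
  nlinarith [sq_nonneg (Real.sin (yy β)), sq_nonneg (Real.cos (yy β)), mul_pos hsh hsh]

-- arguments at θ = 0 and θ = 2π
lemma e1 (β : ℝ) : 2*β*(2*Real.pi-Real.pi)/(1+β^2) = xx β := by unfold xx; ring
lemma e2 (β : ℝ) : 2*(Real.pi-2*Real.pi)/(1+β^2) = -(yy β) := by unfold yy; ring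
lemma e3 (β : ℝ) : 2*β*((0:ℝ)-Real.pi)/(1+β^2) = -(xx β) := by unfold xx; ring
lemma e4 (β : ℝ) : 2*(Real.pi-(0:ℝ))/(1+β^2) = yy β := by unfold yy; ring

lemma ure0 (β : ℝ) : (u β 0).re = Real.sin (yy β) * Real.cos (yy β) / NN β := by
  rw [u_re, e3, e4]
  have key : Real.exp (-(xx β)) *
      (Real.cos (yy β) * (Real.sin (yy β) * Real.cosh (xx β)) +
       Real.sin (yy β) * (Real.cos (yy β) * Real.sinh (xx β)))
      = Real.sin (yy β) * Real.cos (yy β) := by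
    have h : Real.cos (yy β) * (Real.sin (yy β) * Real.cosh (xx β)) +
       Real.sin (yy β) * (Real.cos (yy β) * Real.sinh (xx β))
       = Real.sin (yy β) * Real.cos (yy β) * (Real.cosh (xx β) + Real.sinh (xx β)) := by ring
    rw [h, Real.cosh_add_sinh, Real.exp_neg]
    field_simp
  rw [key]

lemma ure2 (β : ℝ) : (u β (2*Real.pi)).re = Real.sin (yy β) * Real.cos (yy β) / NN β := by
  rw [u_re, e1, e2, Real.cos_neg, Real.sin_neg]
  have key : Real.exp (xx β) *
      (Real.cos (yy β) * (Real.sin (yy β) * Real.cosh (xx β)) +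
       -Real.sin (yy β) * (Real.cos (yy β) * Real.sinh (xx β)))
      = Real.sin (yy β) * Real.cos (yy β) := by
    have h : Real.cos (yy β) * (Real.sin (yy β) * Real.cosh (xx β)) +
       -Real.sin (yy β) * (Real.cos (yy β) * Real.sinh (xx β))
       = Real.sin (yy β) * Real.cos (yy β) * (Real.cosh (xx β) - Real.sinh (xx β)) := by ring
    rw [h, Real.cosh_sub_sinh, Real.exp_neg]
    field_simp
  rw [key]

lemma uim0 (β : ℝ) : (u β 0).im =
    (Real.cosh (xx β) - Real.sinh (xx β)) *
      (Real.sin (yy β) * (Real.sin (yy β) * Real.cosh (xx β)) -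
       Real.cos (yy β) * (Real.cos (yy β) * Real.sinh (xx β))) / NN β := by
  rw [u_im, e3, e4, ← Real.cosh_sub_sinh]

lemma uim2 (β : ℝ) : (u β (2*Real.pi)).im =
    (Real.cosh (xx β) + Real.sinh (xx β)) *
      (-(Real.sin (yy β) * (Real.sin (yy β) * Real.cosh (xx β))) -
       Real.cos (yy β) * (Real.cos (yy β) * Real.sinh (xx β))) / NN β := by
  rw [u_im, e1, e2, Real.cos_neg, Real.sin_neg, ← Real.cosh_add_sinh]
  ring

lemma Kker_per (β : ℝ) (hβ : 0 < β) : Kker β (2*Real.pi) = Kker β 0 := by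
  rw [Kker_eq_u, Kker_eq_u, ure0, ure2]

lemma Kd0_eq (β : ℝ) (hβ : 0 < β) :
    Kd0 β = (β * Real.sin (yy β) * Real.cos (yy β) -
      Real.sinh (xx β) * Real.cosh (xx β) * (Real.sin (yy β)^2 + Real.cos (yy β)^2)) /
      (2*(1+β^2)*NN β) := by
  have hN := (NN_pos β hβ).ne'
  have hd : (0:ℝ) < 1+β^2 := by positivity
  unfold Kd0
  rw [Kd_eq_u, Kd_eq_u, Kker_eq_u, Kker_eq_u, ure0, ure2, uim0, uim2]
  set s := Real.sin (yy β) with hs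
  set co := Real.cos (yy β) with hco
  set sh := Real.sinh (xx β) with hsh
  set ch := Real.cosh (xx β) with hch
  set N := NN β with hN2
  field_simp
  ring

lemma Kd0_neg (β : ℝ) (hβ : 0 < β) : Kd0 β < 0 := by
  rw [Kd0_eq β hβ]
  apply div_neg_of_neg_of_pos
  · have hy := yy_pos β
    have h2y : Real.sin (2*yy β) < 2*yy β := Real.sin_lt (by linarith)
    have hs2 : Real.sin (2*yy β) = 2*Real.sin (yy β)*Real.cos (yy β) := Real.sin_two_mul _
    have hx := xx_pos β hβ
    have hsh : xx β < Real.sinh (xx β) := Real.self_lt_sinh_iff.2 hx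
    have hch : 1 ≤ Real.cosh (xx β) := Real.one_le_cosh _
    have hsp : 0 < Real.sinh (xx β) := Real.sinh_pos_iff.2 hx
    have hxy : xx β = β * yy β := by unfold xx yy; ring
    have hpy : Real.sin (yy β)^2 + Real.cos (yy β)^2 = 1 := Real.sin_sq_add_cos_sq _
    rw [hpy]
    nlinarith
  · have := NN_pos β hβ
    positivity

lemma hasDerivAt_Kker (β θ : ℝ) : HasDerivAt (Kker β) (Kd β θ) θ := by
  have hg : HasDerivAt (fun z : ℂ => Complex.exp (w β * (z - (Real.pi:ℂ)))/S β)
      (w β * Complex.exp (w β * ((θ:ℂ) - (Real.pi:ℂ)))/S β) ((θ:ℂ)) := by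
    have h1 : HasDerivAt (fun z : ℂ => w β * (z - (Real.pi:ℂ))) (w β) ((θ:ℂ)) := by
      simpa using ((hasDerivAt_id ((θ:ℂ))).sub_const (Real.pi:ℂ)).const_mul (w β)
    have := (h1.cexp).div_const (S β)
    exact this.congr_deriv (by ring)
  have hr : HasDerivAt (fun t : ℝ => u β t)
      (w β * Complex.exp (w β * ((θ:ℂ) - (Real.pi:ℂ)))/S β) θ := hg.comp_ofReal
  have hre : HasDerivAt (fun t : ℝ => (u β t).re)
      ((w β * Complex.exp (w β * ((θ:ℂ) - (Real.pi:ℂ)))/S β).re) θ := by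
    exact (Complex.reCLM.hasFDerivAt.comp_hasDerivAt θ hr)
  have hfinal := hre.const_mul (1/4 : ℝ)
  have heq : (1/4 : ℝ) * ((w β * Complex.exp (w β * ((θ:ℂ) - (Real.pi:ℂ)))/S β).re) = Kd β θ := by
    have hwval : w β = ((2*β/(1+β^2) : ℝ):ℂ) + ((-(2/(1+β^2)) : ℝ):ℂ)*Complex.I := by
      have h := hden β
      unfold w
      push_cast
      field_simp
      ring
    have hdiv : w β * Complex.exp (w β * ((θ:ℂ) - (Real.pi:ℂ)))/S β
        = w β * u β θ := by
      unfold u; ring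
    rw [hdiv, Complex.mul_re]
    have hwre : (w β).re = 2*β/(1+β^2) := by
      rw [hwval]
      simp only [Complex.add_re, Complex.ofReal_re, Complex.mul_re, Complex.ofReal_im,
        Complex.I_re, Complex.I_im, mul_zero, mul_one, zero_mul, sub_zero, add_zero,
        zero_add, zero_sub, neg_zero]
    have hwim : (w β).im = -(2/(1+β^2)) := by
      rw [hwval]
      simp only [Complex.add_im, Complex.ofReal_im, Complex.mul_im, Complex.ofReal_re,
        Complex.I_re, Complex.I_im, mul_zero, mul_one, zero_mul, sub_zero, add_zero,
        zero_add, zero_sub, neg_zero]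
    rw [hwre, hwim, Kd_eq_u, Kker_eq_u]
    have hd : (0:ℝ) < 1+β^2 := by positivity
    field_simp
    ring
  rw [heq] at hfinal
  have hKfun : Kker β = fun t : ℝ => (1/4 : ℝ) * (u β t).re := rfl
  rw [hKfun]
  exact hfinal

end R2aux

/-- Fix `β > 0` and assume there is `α ∈ (π,2π)` with `K' > K'(0)` on `(0,α)`,
`K'(α) = K'(0)`, and `K' < K'(0)` on `(α,2π)`. Then for every `θ ∈ (0,2π−α)`,
`K(2π−θ) − K(0) > −K'(0)·θ > K(0) − K(θ)`; in particular `K(2π−θ) − K(0) > 0` and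
`(K(θ)−K(0))/(K(2π−θ)−K(0)) > −1`. -/
theorem R2_gt_neg_one (β : ℝ) (hβ : 0 < β) (α : ℝ)
    (hα : α ∈ Set.Ioo Real.pi (2*Real.pi))
    (h1 : ∀ θ ∈ Set.Ioo (0:ℝ) α, Kd0 β < Kd β θ)
    (h2 : Kd β α = Kd0 β)
    (h3 : ∀ θ ∈ Set.Ioo α (2*Real.pi), Kd β θ < Kd0 β) :
    ∀ θ ∈ Set.Ioo (0:ℝ) (2*Real.pi - α),
      -Kd0 β * θ < Kker β (2*Real.pi - θ) - Kker β 0 ∧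
      Kker β 0 - Kker β θ < -Kd0 β * θ ∧
      0 < Kker β (2*Real.pi - θ) - Kker β 0 ∧
      -1 < (Kker β θ - Kker β 0) / (Kker β (2*Real.pi - θ) - Kker β 0) := by
  intro θ hθ
  obtain ⟨hθ0, hθ2⟩ := hθ
  obtain ⟨hα1, hα2⟩ := hα
  have hπ : 0 < Real.pi := Real.pi_pos
  set c := Kd0 β with hc
  have hcneg : c < 0 := R2aux.Kd0_neg β hβ
  have hFd : ∀ t : ℝ, HasDerivAt (fun s => Kker β s - c*s) (Kd β t - c) t := by
    intro t
    have := (R2aux.hasDerivAt_Kker β t).sub ((hasDerivAt_id t).const_mul c)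
    exact this.congr_deriv (by simp)
  have hF : StrictMonoOn (fun s => Kker β s - c*s) (Set.Icc 0 α) := by
    apply strictMonoOn_of_deriv_pos (convex_Icc _ _)
    · exact fun t _ => ((hFd t).continuousAt).continuousWithinAt
    · intro t ht
      rw [interior_Icc] at ht
      rw [(hFd t).deriv]
      have := h1 t ht
      linarith
  have hGd : ∀ t : ℝ, HasDerivAt (fun s => Kker β (2*Real.pi - s) + c*s)
      (Kd β (2*Real.pi - t) * (-1) + c) t := by
    intro t
    have hinner : HasDerivAt (fun s : ℝ => 2*Real.pi - s) (-1) t := by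
      exact (hasDerivAt_id t).const_sub (2*Real.pi)
    have hcomp := (R2aux.hasDerivAt_Kker β (2*Real.pi - t)).comp t hinner
    have := hcomp.add ((hasDerivAt_id t).const_mul c)
    exact this.congr_deriv (by simp)
  have hG : StrictMonoOn (fun s => Kker β (2*Real.pi - s) + c*s) (Set.Icc 0 (2*Real.pi - α)) := by
    apply strictMonoOn_of_deriv_pos (convex_Icc _ _)
    · exact fun t _ => ((hGd t).continuousAt).continuousWithinAt
    · intro t ht
      rw [interior_Icc] at ht
      rw [(hGd t).deriv]
      have h2πt : 2*Real.pi - t ∈ Set.Ioo α (2*Real.pi) := by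
        constructor
        · linarith [ht.2]
        · linarith [ht.1]
      have := h3 _ h2πt
      linarith
  have hθα : θ < α := by linarith
  have hB : Kker β 0 - Kker β θ < -c * θ := by
    have := hF (Set.mem_Icc.2 ⟨le_refl 0, by linarith⟩)
      (Set.mem_Icc.2 ⟨le_of_lt hθ0, by linarith⟩) hθ0
    simp only at this
    linarith
  have hA : -c * θ < Kker β (2*Real.pi - θ) - Kker β 0 := by
    have := hG (Set.mem_Icc.2 ⟨le_refl 0, by linarith⟩)
      (Set.mem_Icc.2 ⟨le_of_lt hθ0, le_of_lt hθ2⟩) hθ0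
    simp only at this
    have hper : Kker β (2*Real.pi - 0) = Kker β 0 := by
      rw [sub_zero]; exact R2aux.Kker_per β hβ
    rw [hper] at this
    linarith
  have hC : 0 < Kker β (2*Real.pi - θ) - Kker β 0 := by
    have : 0 < -c * θ := mul_pos (by linarith) hθ0
    linarith
  refine ⟨hA, hB, hC, ?_⟩
  rw [lt_div_iff₀ hC]
  nlinarith [hA, hB, hC]
end

section
/- Fix β > 0, let T ∈ ℝ, and let I₁, I₂, θ : [T,∞) → ℝ be continuously differentiable functions with I₂(t) > 0 and θ(t) ∈ (0,2π) for all t ≥ T, satisfying for all t ≥ T: I₁' = 2K'(0)I₁² + 2K'(θ)I₁I₂, I₂' = 2K'(0)I₂² + 2K'(2π−θ)I₁I₂, and θ' = 2(K(0)−K(2π−θ))I₁ + 2(K(θ)−K(0))I₂. Suppose moreover that I₁(t)/I₂(t) → 1 and θ(t) → π as t → ∞. Then K'(0) + K'(π) < 0 and lim_{t→∞} t·I₂(t) = lim_{t→∞} t·I₁(t) = 1/(−2(K'(0)+K'(π))); i.e. both I₁ and I₂ decay to 0 at rate asymptotic to 1/(−2(K'(0)+K'(π))·t). -/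
open Real

lemma frac_re (x y Sx Sy : ℝ) :
    (Complex.exp ((x:ℂ) + (y:ℂ)*Complex.I) / ((Sx:ℂ) + (Sy:ℂ)*Complex.I)).re
      = (Real.exp x * Real.cos y * Sx + Real.exp x * Real.sin y * Sy)/(Sx^2+Sy^2) := by
  simp [Complex.div_re, Complex.exp_re, Complex.exp_im, Complex.normSq_apply]
  ring_nf

lemma frac_im (x y Sx Sy : ℝ) :
    (Complex.exp ((x:ℂ) + (y:ℂ)*Complex.I) / ((Sx:ℂ) + (Sy:ℂ)*Complex.I)).im
      = (Real.exp x * Real.sin y * Sx - Real.exp x * Real.cos y * Sy)/(Sx^2+Sy^2) := by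
  simp [Complex.div_im, Complex.exp_re, Complex.exp_im, Complex.normSq_apply]
  ring_nf


lemma combo (a b s C CH SH : ℝ) (hQ : (s*CH)^2 + (C*SH)^2 ≠ 0)
    (hch : CH^2 - SH^2 = 1) (hsc : s^2 + C^2 = 1) :
    (a * (1/4 * (((CH-SH) * C * (s*CH) + (CH-SH) * s * (C*SH)) / ((s*CH)^2+(C*SH)^2))) +
      b/4 * (((CH-SH) * s * (s*CH) - (CH-SH) * C * (C*SH)) / ((s*CH)^2+(C*SH)^2)) +
     (a * (1/4 * (((CH+SH) * C * (s*CH) + (CH+SH) * (-s) * (C*SH)) / ((s*CH)^2+(C*SH)^2))) +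
      b/4 * (((CH+SH) * (-s) * (s*CH) - (CH+SH) * C * (C*SH)) / ((s*CH)^2+(C*SH)^2)))) / 2 +
    (a * (1/4 * ((1*1*(s*CH) + 1*0*(C*SH)) / ((s*CH)^2+(C*SH)^2))) +
      b/4 * ((1*0*(s*CH) - 1*1*(C*SH)) / ((s*CH)^2+(C*SH)^2)))
    = ((C + CH) * (a*s - b*SH)) / (4*((s*CH)^2+(C*SH)^2)) := by
  have h1 : (a * (1/4 * (((CH-SH) * C * (s*CH) + (CH-SH) * s * (C*SH)) / ((s*CH)^2+(C*SH)^2))) +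
      b/4 * (((CH-SH) * s * (s*CH) - (CH-SH) * C * (C*SH)) / ((s*CH)^2+(C*SH)^2)) +
     (a * (1/4 * (((CH+SH) * C * (s*CH) + (CH+SH) * (-s) * (C*SH)) / ((s*CH)^2+(C*SH)^2))) +
      b/4 * (((CH+SH) * (-s) * (s*CH) - (CH+SH) * C * (C*SH)) / ((s*CH)^2+(C*SH)^2)))) / 2 +
    (a * (1/4 * ((1*1*(s*CH) + 1*0*(C*SH)) / ((s*CH)^2+(C*SH)^2))) +
      b/4 * ((1*0*(s*CH) - 1*1*(C*SH)) / ((s*CH)^2+(C*SH)^2)))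
    = ((a*((CH-SH)*C*(s*CH)+(CH-SH)*s*(C*SH)) + b*((CH-SH)*s*(s*CH)-(CH-SH)*C*(C*SH))
        + (a*((CH+SH)*C*(s*CH)+(CH+SH)*(-s)*(C*SH)) + b*((CH+SH)*(-s)*(s*CH)-(CH+SH)*C*(C*SH))))/2
        + a*(s*CH) - b*(C*SH)) / (4*((s*CH)^2+(C*SH)^2)) := by
    field_simp
    ring
  rw [h1]
  congr 1
  linear_combination (a*s*C)*hch - (b*SH*CH)*hsc

lemma key_ineq (β : ℝ) (hβ : 0 < β) : Kd0 β + Kd β Real.pi < 0 := by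
  have hd : (0:ℝ) < 1 + β^2 := by positivity
  have hdc : (1:ℂ) + (β:ℂ)^2 ≠ 0 := by
    have : ((1+β^2 : ℝ):ℂ) ≠ 0 := Complex.ofReal_ne_zero.mpr hd.ne'
    push_cast at this; exact this
  set a : ℝ := 2*β/(1+β^2) with ha
  set b : ℝ := 2/(1+β^2) with hb
  have hapos : 0 < a := by rw [ha]; positivity
  have hbpos : 0 < b := by rw [hb]; positivity
  have hS : Complex.sin (2*(Real.pi:ℂ)*(1+Complex.I*(β:ℂ))/(1+(β:ℂ)^2))
      = ((Real.sin (b*Real.pi)*Real.cosh (a*Real.pi) : ℝ):ℂ)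
        + ((Real.cos (b*Real.pi)*Real.sinh (a*Real.pi) : ℝ):ℂ)*Complex.I := by
    have harg : 2*(Real.pi:ℂ)*(1+Complex.I*(β:ℂ))/(1+(β:ℂ)^2)
        = ((b*Real.pi:ℝ):ℂ) + ((a*Real.pi:ℝ):ℂ)*Complex.I := by
      rw [ha, hb]; push_cast; field_simp
    rw [harg, Complex.sin_add_mul_I]; push_cast; ring
  have hA0 : (2*((β:ℂ) - Complex.I)/(1+(β:ℂ)^2)) * (((0:ℝ):ℂ) - (Real.pi:ℂ))
      = ((-(a*Real.pi):ℝ):ℂ) + ((b*Real.pi:ℝ):ℂ)*Complex.I := by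
    rw [ha, hb]; push_cast; field_simp; ring
  have hA2 : (2*((β:ℂ) - Complex.I)/(1+(β:ℂ)^2)) * (((2*Real.pi:ℝ):ℂ) - (Real.pi:ℂ))
      = ((a*Real.pi:ℝ):ℂ) + ((-(b*Real.pi):ℝ):ℂ)*Complex.I := by
    rw [ha, hb]; push_cast; field_simp; ring
  have hAπ : (2*((β:ℂ) - Complex.I)/(1+(β:ℂ)^2)) * (((Real.pi:ℝ):ℂ) - (Real.pi:ℂ))
      = ((0:ℝ):ℂ) + ((0:ℝ):ℂ)*Complex.I := by
    push_cast; ring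
  have hQ : 0 < (Real.sin (b*Real.pi)*Real.cosh (a*Real.pi))^2
      + (Real.cos (b*Real.pi)*Real.sinh (a*Real.pi))^2 := by
    rcases eq_or_ne (Real.sin (b*Real.pi)) 0 with h0 | h0
    · have hC2 : (Real.cos (b*Real.pi))^2 = 1 := by
        have := Real.sin_sq_add_cos_sq (b*Real.pi); rw [h0] at this; nlinarith
      have hSHpos : 0 < Real.sinh (a*Real.pi) := Real.sinh_pos_iff.mpr (by positivity)
      have hCne : Real.cos (b*Real.pi) ≠ 0 := by
        intro h; rw [h] at hC2; norm_num at hC2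
      rw [h0]
      have : (0*Real.cosh (a*Real.pi))^2 + (Real.cos (b*Real.pi)*Real.sinh (a*Real.pi))^2
          = (Real.cos (b*Real.pi)*Real.sinh (a*Real.pi))^2 := by ring
      rw [this]; positivity
    · have h1 : 0 < (Real.sin (b*Real.pi)*Real.cosh (a*Real.pi))^2 := by
        have := Real.cosh_pos (a*Real.pi); positivity
      nlinarith [sq_nonneg (Real.cos (b*Real.pi)*Real.sinh (a*Real.pi))]
  have hch : (Real.cosh (a*Real.pi))^2 - (Real.sinh (a*Real.pi))^2 = 1 :=
    Real.cosh_sq_sub_sinh_sq _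
  have hsc : (Real.sin (b*Real.pi))^2 + (Real.cos (b*Real.pi))^2 = 1 :=
    Real.sin_sq_add_cos_sq _
  have hco2 : 1/(2*(1+β^2)) = b/4 := by rw [hb]; field_simp; ring
  have hfac : a*Real.sin (b*Real.pi) - b*Real.sinh (a*Real.pi) < 0 := by
    have haβ : a = β * b := by rw [ha, hb]; ring
    have h1 : Real.sin (b*Real.pi) ≤ b*Real.pi := Real.sin_le (by positivity)
    have h2 : a*Real.pi < Real.sinh (a*Real.pi) := Real.self_lt_sinh_iff.mpr (by positivity)
    have h3 : β * Real.sin (b*Real.pi) ≤ β * (b*Real.pi) :=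
      mul_le_mul_of_nonneg_left h1 hβ.le
    have : a * Real.sin (b*Real.pi) = b * (β * Real.sin (b*Real.pi)) := by rw [haβ]; ring
    nlinarith [mul_lt_mul_of_pos_left h2 hbpos]
  have hCpos : 0 < Real.cos (b*Real.pi) + Real.cosh (a*Real.pi) := by
    have h1 : (1:ℝ) < Real.cosh (a*Real.pi) :=
      Real.one_lt_cosh.mpr (by positivity)
    have h2 : -1 ≤ Real.cos (b*Real.pi) := Real.neg_one_le_cos _
    linarith
  simp only [Kd0, Kd, Kker]
  rw [hA0, hA2, hAπ, hS, frac_re, frac_im, frac_re, frac_im, frac_re, frac_im]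
  simp only [Real.cos_neg, Real.sin_neg, Real.exp_zero, Real.cos_zero, Real.sin_zero]
  rw [show Real.exp (-(a*Real.pi)) = Real.cosh (a*Real.pi) - Real.sinh (a*Real.pi) from
      (Real.cosh_sub_sinh _).symm,
    show Real.exp (a*Real.pi) = Real.cosh (a*Real.pi) + Real.sinh (a*Real.pi) from
      (Real.cosh_add_sinh _).symm,
    hco2, ← ha]
  rw [combo a b _ _ _ _ hQ.ne' hch hsc]
  exact div_neg_of_neg_of_pos (mul_neg_of_pos_of_neg hCpos hfac) (by linarith)


lemma slope_of_deriv {g φ : ℝ → ℝ} {T L : ℝ}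
    (hg : ∀ t, T ≤ t → HasDerivAt g (φ t) t)
    (hφ : Filter.Tendsto φ Filter.atTop (nhds L)) :
    Filter.Tendsto (fun t => g t / t) Filter.atTop (nhds L) := by
  rw [Metric.tendsto_atTop]
  intro ε hε
  obtain ⟨T₀, hT₀⟩ := Metric.tendsto_atTop.mp hφ (ε/2) (by linarith)
  set T₁ : ℝ := max T₀ (max T 1) with hT₁def
  have hT₁T : T ≤ T₁ := le_trans (le_max_left T 1) (le_max_right _ _)
  have hT₁1 : (1:ℝ) ≤ T₁ := le_trans (le_max_right T 1) (le_max_right _ _)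
  have hT₁0 : T₀ ≤ T₁ := le_max_left _ _
  have hmvt : ∀ t ∈ Set.Ici T₁, |(g t - L*t) - (g T₁ - L*T₁)| ≤ ε/2 * |t - T₁| := by
    intro t ht
    have := (convex_Ici T₁).norm_image_sub_le_of_norm_hasDerivWithin_le
      (f := fun u => g u - L*u) (f' := fun u => φ u - L) (C := ε/2)
      (fun x hx => (((hg x (le_trans hT₁T hx)).sub
        (by simpa using (hasDerivAt_id x).const_mul L))).hasDerivWithinAt)
      (fun x hx => by
        have := hT₀ x (le_trans hT₁0 hx)
        rw [Real.dist_eq] at this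
        simpa [Real.norm_eq_abs] using this.le)
      (Set.self_mem_Ici) ht
    simpa [Real.norm_eq_abs] using this
  set A : ℝ := |g T₁ - L*T₁| with hAdef
  have hA0 : 0 ≤ A := abs_nonneg _
  refine ⟨T₁ + 2*A/ε + 1, fun t ht => ?_⟩
  have ht1 : T₁ ≤ t := by
    have : 0 ≤ 2*A/ε := by positivity
    linarith
  have ht0 : (0:ℝ) < t := by linarith
  have hb1 : |g t - L*t| ≤ A + ε/2 * (t - T₁) := by
    have h2 := hmvt t ht1
    rw [abs_of_nonneg (by linarith : (0:ℝ) ≤ t - T₁)] at h2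
    calc |g t - L*t| ≤ |(g t - L*t) - (g T₁ - L*T₁)| + |g T₁ - L*T₁| := by
          have := abs_sub_abs_le_abs_sub (g t - L*t) (g T₁ - L*T₁)
          have h3 := abs_add_le ((g t - L*t) - (g T₁ - L*T₁)) (g T₁ - L*T₁)
          calc |g t - L*t| = |((g t - L*t) - (g T₁ - L*T₁)) + (g T₁ - L*T₁)| := by ring_nf
            _ ≤ _ := h3
      _ ≤ ε/2 * (t - T₁) + A := by rw [hAdef]; linarith
      _ = A + ε/2 * (t - T₁) := by ring
  have key : |g t - L*t| < ε * t := by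
    have hεA : ε * (2*A/ε) = 2*A := by field_simp
    nlinarith
  rw [Real.dist_eq]
  have : g t / t - L = (g t - L*t)/t := by field_simp
  rw [this, abs_div, abs_of_pos ht0, div_lt_iff₀ ht0]
  linarith [key]

lemma Kd_continuous (β : ℝ) : Continuous (Kd β) := by
  unfold Kd Kker
  have h1 : Continuous (fun θ : ℝ => Complex.exp
      ((2*((β:ℂ) - Complex.I)/(1+(β:ℂ)^2)) * ((θ:ℂ) - (Real.pi:ℂ)))) := by
    apply Complex.continuous_exp.comp
    exact (continuous_const.mul ((Complex.continuous_ofReal).sub continuous_const))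
  fun_prop



/-- Fix `β > 0`. If `(I₁,I₂,θ)` solves the original system on `[T,∞)` with `I₂ > 0`,
`θ ∈ (0,2π)`, `I₁/I₂ → 1` and `θ → π` as `t → ∞`, then `K'(0) + K'(π) < 0` and
`t·I₂(t) → 1/(−2(K'(0)+K'(π)))` and `t·I₁(t) → 1/(−2(K'(0)+K'(π)))` as `t → ∞`. -/
theorem asymptotics_symmetric_case (β : ℝ) (hβ : 0 < β) (T : ℝ) (I₁ I₂ θ : ℝ → ℝ)
    (hI2 : ∀ t, T ≤ t → 0 < I₂ t)
    (hθ : ∀ t, T ≤ t → θ t ∈ Set.Ioo (0:ℝ) (2*Real.pi))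
    (hd1 : ∀ t, T ≤ t → HasDerivAt I₁
      (2*Kd0 β*(I₁ t)^2 + 2*Kd β (θ t)*(I₁ t)*(I₂ t)) t)
    (hd2 : ∀ t, T ≤ t → HasDerivAt I₂
      (2*Kd0 β*(I₂ t)^2 + 2*Kd β (2*Real.pi - θ t)*(I₁ t)*(I₂ t)) t)
    (hdθ : ∀ t, T ≤ t → HasDerivAt θ
      (2*(Kker β 0 - Kker β (2*Real.pi - θ t))*(I₁ t) +
        2*(Kker β (θ t) - Kker β 0)*(I₂ t)) t)
    (hc1 : ContinuousOn (deriv I₁) (Set.Ici T))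
    (hc2 : ContinuousOn (deriv I₂) (Set.Ici T))
    (hcθ : ContinuousOn (deriv θ) (Set.Ici T))
    (hratio : Filter.Tendsto (fun t => I₁ t / I₂ t) Filter.atTop (nhds 1))
    (hangle : Filter.Tendsto θ Filter.atTop (nhds Real.pi)) :
    Kd0 β + Kd β Real.pi < 0 ∧
    Filter.Tendsto (fun t => t * I₂ t) Filter.atTop
      (nhds (1 / (-2*(Kd0 β + Kd β Real.pi)))) ∧
    Filter.Tendsto (fun t => t * I₁ t) Filter.atTop
      (nhds (1 / (-2*(Kd0 β + Kd β Real.pi)))) := by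
  have hkey := key_ineq β hβ
  refine ⟨hkey, ?_⟩
  set c : ℝ := Kd0 β + Kd β Real.pi with hc
  set φ : ℝ → ℝ := fun t => -(2*Kd0 β + 2*Kd β (2*Real.pi - θ t) * (I₁ t / I₂ t)) with hφdef
  have hKdlim : Filter.Tendsto (fun t => Kd β (2*Real.pi - θ t)) Filter.atTop
      (nhds (Kd β Real.pi)) := by
    have h1 : Filter.Tendsto (fun t => 2*Real.pi - θ t) Filter.atTop (nhds Real.pi) := by
      have h0 := (tendsto_const_nhds (x := 2*Real.pi) (f := Filter.atTop (α := ℝ))).sub hangle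
      have : 2*Real.pi - Real.pi = Real.pi := by ring
      rwa [this] at h0
    exact ((Kd_continuous β).continuousAt.tendsto).comp h1
  have hφlim : Filter.Tendsto φ Filter.atTop (nhds (-(2*c))) := by
    have h2 : Filter.Tendsto (fun t => 2*Kd0 β + 2*Kd β (2*Real.pi - θ t) * (I₁ t / I₂ t))
        Filter.atTop (nhds (2*Kd0 β + 2*Kd β Real.pi * 1)) :=
      tendsto_const_nhds.add (((hKdlim.const_mul 2).mul hratio))
    have := h2.neg
    convert this using 2
    rw [hc]; ring
  have hg : ∀ t, T ≤ t → HasDerivAt (fun u => (I₂ u)⁻¹) (φ t) t := by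
    intro t ht
    have hne : I₂ t ≠ 0 := (hI2 t ht).ne'
    have := (hd2 t ht).inv hne
    refine HasDerivAt.congr_deriv this ?_
    rw [hφdef]
    field_simp
  have hslope := slope_of_deriv hg hφlim
  have hcpos : (0:ℝ) < -(2*c) := by linarith
  have hinv := hslope.inv₀ hcpos.ne'
  have heq : ∀ᶠ t in Filter.atTop, ((I₂ t)⁻¹ / t)⁻¹ = t * I₂ t := by
    filter_upwards [Filter.eventually_ge_atTop (max T 1)] with t ht
    have htT : T ≤ t := le_trans (le_max_left _ _) ht
    have ht0 : (0:ℝ) < t := lt_of_lt_of_le one_pos (le_trans (le_max_right _ _) ht)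
    have h2 : I₂ t ≠ 0 := (hI2 t htT).ne'
    field_simp
  have h2' : Filter.Tendsto (fun t => t * I₂ t) Filter.atTop (nhds (-(2*c))⁻¹) :=
    Filter.Tendsto.congr' heq hinv
  have hval : (-(2*c))⁻¹ = 1 / (-2*(Kd0 β + Kd β Real.pi)) := by
    rw [one_div, hc]; ring_nf
  rw [hval] at h2'
  refine ⟨h2', ?_⟩
  have h3 : Filter.Tendsto (fun t => (I₁ t / I₂ t) * (t * I₂ t)) Filter.atTop
      (nhds (1 * (1 / (-2*(Kd0 β + Kd β Real.pi))))) := hratio.mul h2'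
  rw [one_mul] at h3
  apply h3.congr'
  filter_upwards [Filter.eventually_ge_atTop T] with t ht
  have h4 : I₂ t ≠ 0 := (hI2 t ht).ne'
  field_simp
end
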